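/- arXiv:1802.02635 — 6 statements merged into one kernel-verified Lean document; each statement's English description precedes it below -/
import Mathlib

section
/- Let n ≥ 1 and s ≥ 1 be integers and let u ∈ ℂ with |u| > 1, and set z = (u + u⁻¹)/2. Then ρ_{n,s}(z) = (2π / (2^{2s} (u − u⁻¹))) Σ_{k=0}^{s} C(2s+1, k) u^{(2k − 2s − 1)n}. -/
open Complex Real

lemma ne_zero_of_norm_gt {u : ℂ} (hu : 1 < ‖u‖) : u ≠ 0 := by
  intro h; simp [h] at hu; linarith

lemma norm_exp_I (θ : ℝ) : ‖Complex.exp (θ*I)‖ = 1 := by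
  rw [Complex.norm_exp]; simp

lemma norm_exp_negI (θ : ℝ) : ‖Complex.exp (-(θ*I))‖ = 1 := by
  rw [Complex.norm_exp]; simp

lemma slit_of_small {v : ℂ} (hv : ‖v‖ < 1) : (1 - v) ∈ Complex.slitPlane := by
  rw [Complex.mem_slitPlane_iff]
  left
  have := Complex.re_le_norm v
  simp only [Complex.sub_re, Complex.one_re]
  linarith

lemma one_sub_ne {v : ℂ} (hv : ‖v‖ < 1) : (1 : ℂ) - v ≠ 0 :=
  Complex.slitPlane_ne_zero (slit_of_small hv)

lemma norm_inv_lt_one {u : ℂ} (hu : 1 < ‖u‖) : ‖u⁻¹‖ < 1 := by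
  rw [norm_inv, inv_lt_one_iff₀]; right; exact hu

lemma u_sub_inv_ne {u : ℂ} (hu : 1 < ‖u‖) : u - u⁻¹ ≠ 0 := by
  intro h
  rw [sub_eq_zero] at h
  have := norm_inv_lt_one hu
  rw [← h] at this; linarith

lemma z_sub_cos_ne {u : ℂ} (hu : 1 < ‖u‖) (θ : ℝ) :
    (u + u⁻¹)/2 - (Real.cos θ : ℂ) ≠ 0 := by
  intro h
  have hu0 : u ≠ 0 := ne_zero_of_norm_gt hu
  have hc : (Real.cos θ : ℂ) = (Complex.exp (θ*I) + Complex.exp (-(θ*I)))/2 := by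
    rw [Complex.ofReal_cos, Complex.cos]; ring_nf
  have hinv : u * u⁻¹ = 1 := mul_inv_cancel₀ hu0
  have hee : Complex.exp (θ*I) * Complex.exp (-(θ*I)) = 1 := by
    rw [← Complex.exp_add]; simp
  rw [hc] at h
  have hfac : (u - Complex.exp (θ*I)) * (u - Complex.exp (-(θ*I))) = 0 := by
    linear_combination 2*u*h + hee - hinv
  rcases mul_eq_zero.1 hfac with h' | h' <;>
  · rw [sub_eq_zero] at h'
    have h1 : ‖u‖ = 1 := by rw [h']; first | exact norm_exp_I θ | exact norm_exp_negI θ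
    rw [h1] at hu; linarith

lemma key_alg (u e e' : ℂ) (hu0 : u ≠ 0) (hne : 1 - u⁻¹ * e ≠ 0) (hne' : 1 - u⁻¹ * e' ≠ 0)
    (hee : e * e' = 1) :
    (2*(1 + u⁻¹*e/(1 - u⁻¹*e) + u⁻¹*e'/(1 - u⁻¹*e'))) * ((u + u⁻¹)/2 - (e + e')/2)
      = u - u⁻¹ := by
  have h1 : u - e ≠ 0 := by
    intro h; apply hne; rw [sub_eq_zero] at h; rw [sub_eq_zero, ← h]
    exact (inv_mul_cancel₀ hu0).symm
  have h2 : u - e' ≠ 0 := by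
    intro h; apply hne'; rw [sub_eq_zero] at h; rw [sub_eq_zero, ← h]
    exact (inv_mul_cancel₀ hu0).symm
  have k1 : u⁻¹*e/(1 - u⁻¹*e) = e/(u - e) := by
    rw [div_eq_div_iff hne h1]; field_simp
  have k2 : u⁻¹*e'/(1 - u⁻¹*e') = e'/(u - e') := by
    rw [div_eq_div_iff hne' h2]; field_simp
  rw [k1, k2]
  field_simp
  linear_combination (u*(e+e') - 2*u^2) * hee

lemma cont_denom {u : ℂ} (hu : 1 < ‖u‖) {g : ℝ → ℂ} (hg : Continuous g) :
    Continuous (fun θ : ℝ => g θ / ((u + u⁻¹)/2 - (Real.cos θ : ℂ))) :=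
  hg.div (continuous_const.sub (Complex.continuous_ofReal.comp Real.continuous_cos))
    (fun θ => z_sub_cos_ne hu θ)

lemma deriv_step {u : ℂ} (hu : 1 < ‖u‖) (θ : ℝ) :
    HasDerivAt (fun θ : ℝ => (2/(u-u⁻¹)) * ((θ:ℂ)
        + I * Complex.log (1 - u⁻¹ * Complex.exp (θ*I))
        - I * Complex.log (1 - u⁻¹ * Complex.exp (-(θ*I)))))
      (1 / ((u + u⁻¹)/2 - (Real.cos θ : ℂ))) θ := by
  have hu0 : u ≠ 0 := ne_zero_of_norm_gt hu
  have hθ : HasDerivAt (fun θ : ℝ => (θ:ℂ)) 1 θ := Complex.ofRealCLM.hasDerivAt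
  set e := Complex.exp (θ*I) with he_def
  set e' := Complex.exp (-(θ*I)) with he'_def
  have hnorme : ‖u⁻¹ * e‖ < 1 := by
    rw [norm_mul, norm_exp_I, mul_one]; exact norm_inv_lt_one hu
  have hnorme' : ‖u⁻¹ * e'‖ < 1 := by
    rw [norm_mul, norm_exp_negI, mul_one]; exact norm_inv_lt_one hu
  have hne : (1:ℂ) - u⁻¹ * e ≠ 0 := one_sub_ne hnorme
  have hne' : (1:ℂ) - u⁻¹ * e' ≠ 0 := one_sub_ne hnorme'
  have he : HasDerivAt (fun θ : ℝ => Complex.exp (θ*I)) (e * I) θ := by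
    simpa using (hθ.mul_const I).cexp
  have he' : HasDerivAt (fun θ : ℝ => Complex.exp (-(θ*I))) (-(e' * I)) θ := by
    simpa using ((hθ.mul_const I).neg).cexp
  have h1 : HasDerivAt (fun θ : ℝ => Complex.log (1 - u⁻¹ * Complex.exp (θ*I)))
      ((-(u⁻¹ * (e * I))) / (1 - u⁻¹ * e)) θ :=
    (((he.const_mul u⁻¹).const_sub 1)).clog_real (slit_of_small hnorme)
  have h2 : HasDerivAt (fun θ : ℝ => Complex.log (1 - u⁻¹ * Complex.exp (-(θ*I))))
      ((-(u⁻¹ * (-(e' * I)))) / (1 - u⁻¹ * e')) θ :=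
    (((he'.const_mul u⁻¹).const_sub 1)).clog_real (slit_of_small hnorme')
  have hsum := ((hθ.add (h1.const_mul I)).sub (h2.const_mul I)).const_mul (2/(u-u⁻¹))
  convert hsum using 1
  · rfl
  · rfl
  have hc : (Real.cos θ : ℂ) = (e + e')/2 := by
    rw [Complex.ofReal_cos, Complex.cos, he_def, he'_def]; ring_nf
  have hee : e * e' = 1 := by rw [he_def, he'_def, ← Complex.exp_add]; simp
  have hZne := z_sub_cos_ne hu θ
  rw [hc] at hZne ⊢
  have husub : u - u⁻¹ ≠ 0 := u_sub_inv_ne hu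
  have hS := key_alg u e e' hu0 hne hne' hee
  have hVS : (2/(u-u⁻¹)) * (1 + I * ((-(u⁻¹ * (e * I))) / (1 - u⁻¹ * e))
        - I * ((-(u⁻¹ * (-(e' * I)))) / (1 - u⁻¹ * e')))
      = (2/(u-u⁻¹)) * (1 + u⁻¹*e/(1 - u⁻¹*e) + u⁻¹*e'/(1 - u⁻¹*e')) := by
    linear_combination (-(2/(u-u⁻¹)) * (u⁻¹*e/(1 - u⁻¹*e) + u⁻¹*e'/(1 - u⁻¹*e')))
      * Complex.I_sq
  rw [hVS, div_eq_iff hZne]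
  have hinv2 : (u-u⁻¹) * (u-u⁻¹)⁻¹ = 1 := mul_inv_cancel₀ husub
  linear_combination (-(u-u⁻¹)⁻¹) * hS - hinv2

lemma K0 {u : ℂ} (hu : 1 < ‖u‖) :
    (∫ θ in (0:ℝ)..π, 1 / ((u+u⁻¹)/2 - (Real.cos θ:ℂ))) = 2*π/(u-u⁻¹) := by
  have hint : IntervalIntegrable (fun θ:ℝ => 1/((u+u⁻¹)/2 - (Real.cos θ:ℂ)))
      MeasureTheory.volume 0 π :=
    (cont_denom hu continuous_const).intervalIntegrable _ _
  rw [intervalIntegral.integral_eq_sub_of_hasDerivAt (fun θ _ => deriv_step hu θ) hint]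
  simp [Complex.exp_pi_mul_I, Complex.exp_neg]
  ring_nf

lemma cosint_zero (m : ℕ) (hm : 1 ≤ m) :
    (∫ θ in (0:ℝ)..π, (Real.cos (m*θ) : ℂ)) = 0 := by
  have : (∫ θ in (0:ℝ)..π, Real.cos (m*θ)) = 0 := by
    have hm0 : (m:ℝ) ≠ 0 := by positivity
    rw [intervalIntegral.integral_comp_mul_left (fun x => Real.cos x) hm0]
    simp [integral_cos, Real.sin_nat_mul_pi]
  rw [intervalIntegral.integral_ofReal, this, Complex.ofReal_zero]

lemma intable {u : ℂ} (hu : 1 < ‖u‖) (m : ℕ) (a b : ℝ) :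
    IntervalIntegrable (fun θ : ℝ => (Real.cos (m*θ) : ℂ) / ((u+u⁻¹)/2 - (Real.cos θ:ℂ)))
      MeasureTheory.volume a b := by
  apply Continuous.intervalIntegrable
  exact cont_denom hu (Complex.continuous_ofReal.comp (by fun_prop))

lemma Kall {u : ℂ} (hu : 1 < ‖u‖) (m : ℕ) :
    (∫ θ in (0:ℝ)..π, (Real.cos (m*θ) : ℂ) / ((u+u⁻¹)/2 - (Real.cos θ:ℂ)))
      = 2*π/(u-u⁻¹) * (u⁻¹)^m := by
  have hu0 : u ≠ 0 := ne_zero_of_norm_gt hu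
  have husub : u - u⁻¹ ≠ 0 := u_sub_inv_ne hu
  have hiu : u⁻¹ ≠ 0 := inv_ne_zero hu0
  have base0 : (∫ θ in (0:ℝ)..π, (Real.cos ((0:ℕ)*θ) : ℂ) / ((u+u⁻¹)/2 - (Real.cos θ:ℂ)))
      = 2*π/(u-u⁻¹) * (u⁻¹)^(0:ℕ) := by
    simp only [Nat.cast_zero, zero_mul, Real.cos_zero, Complex.ofReal_one, pow_zero, mul_one]
    simpa using K0 hu
  have base1 : (∫ θ in (0:ℝ)..π, (Real.cos ((1:ℕ)*θ) : ℂ) / ((u+u⁻¹)/2 - (Real.cos θ:ℂ)))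
      = 2*π/(u-u⁻¹) * (u⁻¹)^(1:ℕ) := by
    have hpt : ∀ θ : ℝ, (Real.cos ((1:ℕ)*θ) : ℂ) / ((u+u⁻¹)/2 - (Real.cos θ:ℂ))
        = (u+u⁻¹)/2 * (1 / ((u+u⁻¹)/2 - (Real.cos θ:ℂ))) - 1 := by
      intro θ
      have hz := z_sub_cos_ne hu θ
      have hZZ : ((u+u⁻¹)/2 - (Real.cos θ:ℂ)) * ((u+u⁻¹)/2 - (Real.cos θ:ℂ))⁻¹ = 1 :=
        mul_inv_cancel₀ hz
      push_cast [one_mul] at hZZ ⊢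
      linear_combination (-1 : ℂ) * hZZ
    rw [intervalIntegral.integral_congr (g := fun θ : ℝ =>
      (u+u⁻¹)/2 * (1 / ((u+u⁻¹)/2 - (Real.cos θ:ℂ))) - 1) (fun θ _ => hpt θ)]
    rw [intervalIntegral.integral_sub (f := fun θ : ℝ => (u+u⁻¹)/2 * (1 / ((u+u⁻¹)/2 - (Real.cos θ:ℂ))))
      ((continuous_const.mul (cont_denom hu continuous_const)).intervalIntegrable _ _)
      (continuous_const.intervalIntegrable _ _)]
    rw [intervalIntegral.integral_const_mul, K0 hu]
    simp only [intervalIntegral.integral_const, sub_zero, Complex.real_smul,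
      Complex.ofReal_one, mul_one]
    have hsubinv : (u-u⁻¹)*(u-u⁻¹)⁻¹ = 1 := mul_inv_cancel₀ husub
    linear_combination (π:ℂ) * hsubinv
  suffices h : ∀ m : ℕ,
      ((∫ θ in (0:ℝ)..π, (Real.cos (m*θ) : ℂ) / ((u+u⁻¹)/2 - (Real.cos θ:ℂ)))
        = 2*π/(u-u⁻¹) * (u⁻¹)^m) ∧
      ((∫ θ in (0:ℝ)..π, (Real.cos ((m+1:ℕ)*θ) : ℂ) / ((u+u⁻¹)/2 - (Real.cos θ:ℂ)))
        = 2*π/(u-u⁻¹) * (u⁻¹)^(m+1)) by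
    exact (h m).1
  intro m
  induction m with
  | zero => exact ⟨base0, base1⟩
  | succ m ih =>
    refine ⟨ih.2, ?_⟩
    have hpt : ∀ θ : ℝ, (Real.cos ((m+2:ℕ)*θ) : ℂ) / ((u+u⁻¹)/2 - (Real.cos θ:ℂ))
        = (u+u⁻¹) * ((Real.cos ((m+1:ℕ)*θ) : ℂ) / ((u+u⁻¹)/2 - (Real.cos θ:ℂ)))
          - 2 * (Real.cos ((m+1:ℕ)*θ) : ℂ)
          - (Real.cos ((m:ℕ)*θ) : ℂ) / ((u+u⁻¹)/2 - (Real.cos θ:ℂ)) := by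
      intro θ
      have hz := z_sub_cos_ne hu θ
      have hcos : Real.cos (((m:ℝ)+2)*θ) + Real.cos ((m:ℝ)*θ)
          = 2 * Real.cos (((m:ℝ)+1)*θ) * Real.cos θ := by
        have a : ((m:ℝ)+2)*θ = (((m:ℝ)+1)*θ)+θ := by ring
        have b : (m:ℝ)*θ = (((m:ℝ)+1)*θ)-θ := by ring
        rw [a, b, Real.cos_add, Real.cos_sub]; ring
      have hZZ : ((u+u⁻¹)/2 - (Real.cos θ:ℂ)) * ((u+u⁻¹)/2 - (Real.cos θ:ℂ))⁻¹ = 1 :=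
        mul_inv_cancel₀ hz
      have hC := congrArg (fun r : ℝ => (r:ℂ)) hcos
      push_cast at hC hZZ ⊢
      linear_combination (((u + u⁻¹)/2 - Complex.cos (θ:ℂ))⁻¹) * hC
        + (-2*Complex.cos (((m:ℂ)+1)*(θ:ℂ))) * hZZ
    rw [intervalIntegral.integral_congr (fun θ _ => hpt θ)]
    rw [intervalIntegral.integral_sub (((intable hu (m+1) 0 π).const_mul _).sub
      ((Continuous.intervalIntegrable (by fun_prop) _ _).const_mul 2)) (intable hu m 0 π)]
    rw [intervalIntegral.integral_sub ((intable hu (m+1) 0 π).const_mul _)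
      ((Continuous.intervalIntegrable (by fun_prop) _ _).const_mul 2)]
    rw [intervalIntegral.integral_const_mul, intervalIntegral.integral_const_mul,
      cosint_zero (m+1) (by omega), ih.1, ih.2]
    have hinv : u * u⁻¹ = 1 := mul_inv_cancel₀ hu0
    linear_combination (2*(π:ℂ)*(u-u⁻¹)⁻¹*u⁻¹^m) * hinv

lemma cospow (s : ℕ) (x : ℝ) :
    (Real.cos x : ℂ)^(2*s+1)
      = ((2:ℂ)^(2*s))⁻¹ * ∑ k ∈ Finset.range (s+1),
          (((2*s+1).choose k : ℕ) : ℂ) * ((Real.cos (((2*s+1-2*k : ℕ) : ℝ)*x)) : ℂ) := by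
  rw [eq_inv_mul_iff_mul_eq₀ (pow_ne_zero _ (two_ne_zero))]
  set w := Complex.exp (x*I) with hw_def
  have hw : w ≠ 0 := Complex.exp_ne_zero _
  have hwm : ∀ m : ℕ, w^m = Complex.exp (((m:ℝ)*x : ℝ)*I) := by
    intro m
    rw [hw_def, ← Complex.exp_nat_mul]
    push_cast
    ring_nf
  have hcos2 : ∀ m : ℕ, 2*(Real.cos ((m:ℝ)*x) : ℂ) = w^m + (w^m)⁻¹ := by
    intro m
    rw [hwm m, Complex.ofReal_cos, Complex.cos, ← Complex.exp_neg]
    push_cast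
    ring_nf
  have hcosx : 2*(Real.cos x : ℂ) = w + w⁻¹ := by simpa using hcos2 1
  have hcancel : (2:ℂ) * w^(2*s+1) ≠ 0 :=
    mul_ne_zero two_ne_zero (pow_ne_zero _ hw)
  apply mul_left_cancel₀ hcancel
  have lhs1 : (2:ℂ) * w^(2*s+1) * ((2:ℂ)^(2*s) * (Real.cos x:ℂ)^(2*s+1))
      = (w^2 + 1)^(2*s+1) := by
    have hp : (2:ℂ) * w^(2*s+1) * ((2:ℂ)^(2*s) * (Real.cos x:ℂ)^(2*s+1))
        = (2 * (Real.cos x:ℂ) * w)^(2*s+1) := by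
      rw [mul_pow, mul_pow, pow_succ (2:ℂ)]
      ring
    rw [hp, hcosx]
    congr 1
    field_simp
  have lhs2 : (w^2 + 1)^(2*s+1)
      = ∑ j ∈ Finset.range (2*s+1+1), (((2*s+1).choose j : ℕ) : ℂ) * (w^2)^j := by
    rw [add_pow]
    apply Finset.sum_congr rfl
    intro j _
    simp [mul_comm]
  have split : ∑ j ∈ Finset.range (2*s+1+1), (((2*s+1).choose j : ℕ) : ℂ) * (w^2)^j
      = (∑ k ∈ Finset.range (s+1), (((2*s+1).choose k : ℕ) : ℂ) * (w^2)^k)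
        + ∑ k ∈ Finset.range (s+1), (((2*s+1).choose (2*s+1-k) : ℕ) : ℂ) * (w^2)^(2*s+1-k) := by
    rw [← Finset.sum_range_add_sum_Ico _ (show s+1 ≤ 2*s+1+1 by omega)]
    congr 1
    rw [Finset.sum_Ico_eq_sum_range]
    have h2 : 2*s+1+1 - (s+1) = s+1 := by omega
    rw [h2, ← Finset.sum_range_reflect]
    apply Finset.sum_congr rfl
    intro k hk
    simp only [Finset.mem_range] at hk
    have h3 : s + 1 + (s + 1 - 1 - k) = 2*s+1-k := by omega
    rw [h3]
  rw [lhs1, lhs2, split, Finset.mul_sum, ← Finset.sum_add_distrib]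
  apply Finset.sum_congr rfl
  intro k hk
  simp only [Finset.mem_range] at hk
  have hchoose : (2*s+1).choose (2*s+1-k) = (2*s+1).choose k := Nat.choose_symm (by omega)
  rw [hchoose]
  have h2c := hcos2 (2*s+1-2*k)
  have hwinv : (w^(2*s+1-2*k))⁻¹ * w^(2*s+1) = (w^2)^k := by
    rw [inv_mul_eq_iff_eq_mul₀ (pow_ne_zero _ hw), ← pow_mul, ← pow_add]
    congr 1
    omega
  have hwfwd : (w^(2*s+1-2*k)) * w^(2*s+1) = (w^2)^(2*s+1-k) := by
    rw [← pow_add, ← pow_mul]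
    congr 1
    omega
  calc (((2*s+1).choose k : ℕ) : ℂ) * (w^2)^k + (((2*s+1).choose k : ℕ) : ℂ) * (w^2)^(2*s+1-k)
      = (((2*s+1).choose k : ℕ) : ℂ)
          * ((w^(2*s+1-2*k))⁻¹ * w^(2*s+1) + (w^(2*s+1-2*k)) * w^(2*s+1)) := by
        rw [hwinv, hwfwd]; ring
    _ = (((2*s+1).choose k : ℕ) : ℂ)
          * ((2*(Real.cos (((2*s+1-2*k : ℕ) : ℝ)*x) : ℂ)) * w^(2*s+1)) := by
        rw [h2c]; ring
    _ = 2 * w^(2*s+1) * ((((2*s+1).choose k : ℕ) : ℂ)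
          * (Real.cos (((2*s+1-2*k : ℕ) : ℝ)*x) : ℂ)) := by ring

lemma cos_image : Real.cos '' (Set.Ioo 0 π) = Set.Ioo (-1 : ℝ) 1 := by
  ext y
  constructor
  · rintro ⟨θ, hθ, rfl⟩
    obtain ⟨h1, h2⟩ := hθ
    constructor
    · have := Real.strictAntiOn_cos (Set.mem_Icc.2 ⟨h1.le, h2.le⟩)
        (Set.mem_Icc.2 ⟨Real.pi_pos.le, le_refl π⟩) h2
      rwa [Real.cos_pi] at this
    · have := Real.strictAntiOn_cos (Set.mem_Icc.2 ⟨le_refl 0, Real.pi_pos.le⟩)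
        (Set.mem_Icc.2 ⟨h1.le, h2.le⟩) h1
      rwa [Real.cos_zero] at this
  · intro hy
    refine ⟨Real.arccos y, ⟨Real.arccos_pos.2 hy.2, ?_⟩, Real.cos_arccos hy.1.le hy.2.le⟩
    refine lt_of_le_of_ne (Real.arccos_le_pi y) fun h => ?_
    rw [Real.arccos_eq_pi] at h
    linarith [hy.1]

lemma subst_cos (F : ℝ → ℂ) :
    (∫ t in (-1:ℝ)..1, F t / (Real.sqrt (1 - t^2) : ℂ))
      = ∫ θ in (0:ℝ)..π, F (Real.cos θ) := by
  have hderiv : ∀ θ ∈ Set.Ioo (0:ℝ) π,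
      HasDerivWithinAt Real.cos (-Real.sin θ) (Set.Ioo 0 π) θ :=
    fun θ _ => (Real.hasDerivAt_cos θ).hasDerivWithinAt
  have hinj : Set.InjOn Real.cos (Set.Ioo 0 π) :=
    Real.injOn_cos.mono Set.Ioo_subset_Icc_self
  have key := MeasureTheory.integral_image_eq_integral_abs_deriv_smul measurableSet_Ioo
    hderiv hinj (fun t => F t / (Real.sqrt (1 - t^2) : ℂ))
  rw [cos_image] at key
  have hL : (∫ t in (-1:ℝ)..1, F t / (Real.sqrt (1 - t^2) : ℂ))
      = ∫ t in Set.Ioo (-1:ℝ) 1, F t / (Real.sqrt (1 - t^2) : ℂ) := by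
    rw [intervalIntegral.integral_of_le (by norm_num : (-1:ℝ) ≤ 1),
      MeasureTheory.integral_Ioc_eq_integral_Ioo]
  have hR : (∫ θ in Set.Ioo (0:ℝ) π,
        |(-Real.sin θ)| • (F (Real.cos θ) / (Real.sqrt (1 - Real.cos θ^2) : ℂ)))
      = ∫ θ in Set.Ioo (0:ℝ) π, F (Real.cos θ) := by
    apply MeasureTheory.setIntegral_congr_fun measurableSet_Ioo
    intro θ hθ
    obtain ⟨h1, h2⟩ := hθ
    have hsin : 0 < Real.sin θ := Real.sin_pos_of_pos_of_lt_pi h1 h2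
    have hsq : 1 - Real.cos θ^2 = Real.sin θ^2 := by
      have := Real.sin_sq_add_cos_sq θ; linarith
    simp only [hsq, Real.sqrt_sq hsin.le, abs_neg, abs_of_pos hsin]
    rw [Complex.real_smul]
    have hne : (Real.sin θ : ℂ) ≠ 0 := Complex.ofReal_ne_zero.2 hsin.ne'
    field_simp
  rw [hL, key, hR, intervalIntegral.integral_of_le Real.pi_pos.le,
    MeasureTheory.integral_Ioc_eq_integral_Ioo]

noncomputable def chebT (m : ℕ) (x : ℂ) : ℂ := (Polynomial.Chebyshev.T ℂ m).eval x

noncomputable def rhoNS (n s : ℕ) (z : ℂ) : ℂ :=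
  ∫ t in (-1:ℝ)..1, chebT n (t : ℂ) ^ (2*s+1) / ((z - (t:ℂ)) * (Real.sqrt (1 - t^2) : ℂ))

/-- For `n ≥ 1`, `s ≥ 1`, `|u| > 1` and `z = (u + u⁻¹)/2`,
`ρ_{n,s}(z) = (2π / (2^(2s) (u − u⁻¹))) Σ_{k=0}^{s} C(2s+1, k) u^((2k−2s−1)n)`. -/
theorem stmt2 (n s : ℕ) (hn : 1 ≤ n) (hs : 1 ≤ s) (u : ℂ) (hu : 1 < ‖u‖)
    (z : ℂ) (hz : z = (u + u⁻¹) / 2) :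
    rhoNS n s z = (2 * (π:ℂ) / (2^(2*s) * (u - u⁻¹))) *
      ∑ k ∈ Finset.range (s + 1),
        (Nat.choose (2*s+1) k : ℂ) * u ^ ((2*(k:ℤ) - 2*(s:ℤ) - 1) * (n:ℤ)) := by
  subst hz
  have hu0 : u ≠ 0 := ne_zero_of_norm_gt hu
  have husub : u - u⁻¹ ≠ 0 := u_sub_inv_ne hu
  have hcheb : ∀ θ : ℝ, chebT n (Real.cos θ : ℂ) = (Real.cos (n*θ) : ℂ) := by
    intro θ
    unfold chebT
    rw [Complex.ofReal_cos, Polynomial.Chebyshev.T_complex_cos]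
    push_cast
    ring_nf
  have hpt : ∀ θ : ℝ, chebT n (Real.cos θ : ℂ) ^ (2*s+1) / ((u + u⁻¹)/2 - (Real.cos θ:ℂ))
      = ((2:ℂ)^(2*s))⁻¹ * ∑ k ∈ Finset.range (s+1),
          (((2*s+1).choose k : ℕ) : ℂ) *
            ((Real.cos ((((2*s+1-2*k)*n : ℕ) : ℝ)*θ) : ℂ) / ((u + u⁻¹)/2 - (Real.cos θ:ℂ))) := by
    intro θ
    rw [hcheb θ, cospow s (n*θ), mul_div_assoc, Finset.sum_div]
    congr 1
    apply Finset.sum_congr rfl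
    intro k _
    rw [mul_div_assoc]
    congr 3
    push_cast
    ring
  unfold rhoNS
  simp only [div_mul_eq_div_div]
  rw [subst_cos (fun t : ℝ => chebT n (t : ℂ) ^ (2*s+1) / ((u + u⁻¹)/2 - (t:ℂ)))]
  rw [intervalIntegral.integral_congr (fun θ _ => hpt θ)]
  rw [intervalIntegral.integral_const_mul]
  have hint : ∀ k ∈ Finset.range (s+1), IntervalIntegrable (fun θ : ℝ =>
      (((2*s+1).choose k : ℕ) : ℂ) *
        ((Real.cos ((((2*s+1-2*k)*n : ℕ) : ℝ)*θ) : ℂ) / ((u + u⁻¹)/2 - (Real.cos θ:ℂ))))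
      MeasureTheory.volume 0 π := fun k _ =>
    Continuous.intervalIntegrable (continuous_const.mul (cont_denom hu
      (Complex.continuous_ofReal.comp (by fun_prop)))) _ _
  rw [intervalIntegral.integral_finset_sum hint]
  have hterm : ∀ k ∈ Finset.range (s+1),
      (∫ θ in (0:ℝ)..π, (((2*s+1).choose k : ℕ) : ℂ) *
          ((Real.cos ((((2*s+1-2*k)*n : ℕ) : ℝ)*θ) : ℂ) / ((u + u⁻¹)/2 - (Real.cos θ:ℂ))))
        = (((2*s+1).choose k : ℕ) : ℂ) * (2*π/(u-u⁻¹) * (u⁻¹)^((2*s+1-2*k)*n)) := by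
    intro k _
    rw [intervalIntegral.integral_const_mul, Kall hu ((2*s+1-2*k)*n)]
  rw [Finset.sum_congr rfl hterm, Finset.mul_sum, Finset.mul_sum]
  apply Finset.sum_congr rfl
  intro k hk
  simp only [Finset.mem_range] at hk
  have hzp : u ^ ((2*(k:ℤ) - 2*(s:ℤ) - 1) * (n:ℤ)) = (u⁻¹)^((2*s+1-2*k)*n) := by
    have he : (2*(k:ℤ) - 2*(s:ℤ) - 1) * (n:ℤ) = -((((2*s+1-2*k)*n : ℕ)) : ℤ) := by
      push_cast [Nat.cast_sub (show 2*k ≤ 2*s+1 by omega)]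
      ring
    rw [he, zpow_neg, zpow_natCast, inv_pow]
  rw [hzp]
  have h2ne : ((2:ℂ)^(2*s)) ≠ 0 := pow_ne_zero _ two_ne_zero
  field_simp
end

section
/- (Lemma 3) Let s ≥ 1 and m ≥ 0 be integers. Then for every integer t ≥ 0, Σ_{i=0}^{t} (−1)^i C(m+s−1+i, 2s−1) C(2s+1, i) = (−1)^t · [(s(2m+2s+2) − t) / ((m+s)(m+s+1))] · C(m+s+t, 2s) · C(2s, t), as an identity of rational numbers. -/
lemma aux_choose (N k : ℕ) :
    ((k : ℚ) + 1) * (N.choose (k+1) : ℚ) = ((N : ℚ) - k) * (N.choose k : ℚ) := by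
  rcases le_or_gt k N with h | h
  · have h2 := Nat.choose_succ_right_eq N k
    have h3 := congrArg (Nat.cast : ℕ → ℚ) h2
    push_cast [Nat.cast_sub h] at h3
    linarith
  · rw [Nat.choose_eq_zero_of_lt h, Nat.choose_eq_zero_of_lt (by omega)]
    ring

lemma key_step (sQ tQ nQ a b p q : ℚ) (hsQ : sQ ≠ 0) (htQ : tQ + 1 ≠ 0)
    (h1 : (tQ + 1) * p = (2*sQ - tQ) * q)
    (h2 : 2*sQ*a = (nQ + tQ + 1 - 2*sQ) * b) :
    (2*sQ*(nQ+1) - tQ - 1) * (a+b) * p + (2*sQ*(nQ+1) - tQ) * a * q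
      = nQ * (nQ+1) * b * (p+q) := by
  have hp : p = (2*sQ - tQ) * q / (tQ + 1) := by field_simp; linarith
  have ha : a = (nQ + tQ + 1 - 2*sQ) * b / (2*sQ) := by field_simp; linarith
  rw [hp, ha]
  field_simp
  ring

/-- (Lemma 3) For integers `s ≥ 1`, `m ≥ 0`, `t ≥ 0`:
`Σ_{i=0}^{t} (−1)^i C(m+s−1+i, 2s−1) C(2s+1, i)
  = (−1)^t (s(2m+2s+2) − t)/((m+s)(m+s+1)) · C(m+s+t, 2s) · C(2s, t)`
as an identity of rational numbers. -/
theorem stmt7 (s m t : ℕ) (hs : 1 ≤ s) :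
    ∑ i ∈ Finset.range (t + 1),
        (-1 : ℚ)^i * (Nat.choose (m + s - 1 + i) (2*s - 1) : ℚ) * (Nat.choose (2*s+1) i : ℚ) =
      (-1 : ℚ)^t * (((s : ℚ) * (2*m + 2*s + 2) - t) / (((m : ℚ) + s) * ((m : ℚ) + s + 1))) *
        (Nat.choose (m + s + t) (2*s) : ℚ) * (Nat.choose (2*s) t : ℚ) := by
  have hs1 : (1:ℚ) ≤ (s:ℚ) := by exact_mod_cast hs
  have hm0 : (0:ℚ) ≤ (m:ℚ) := by positivity
  have hn : ((m:ℚ) + s) ≠ 0 := by nlinarith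
  have hn1 : ((m:ℚ) + s + 1) ≠ 0 := by nlinarith
  induction t with
  | zero =>
    simp only [zero_add, Finset.sum_range_one, pow_zero, Nat.choose_zero_right, Nat.cast_one,
      Nat.cast_zero, add_zero, mul_one, one_mul]
    -- key : (m+s) * C(m+s-1, 2s-1) = C(m+s, 2s) * 2s
    have h1 : m + s - 1 + 1 = m + s := by omega
    have h2 : 2*s - 1 + 1 = 2*s := by omega
    have key := Nat.add_one_mul_choose_eq (m + s - 1) (2*s - 1)
    rw [h1, h2] at key
    have keyQ := congrArg (Nat.cast : ℕ → ℚ) key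
    push_cast [h2] at keyQ
    field_simp
    nlinarith [keyQ]
  | succ t ih =>
    rw [Finset.sum_range_succ, ih]
    have hidx : m + s - 1 + (t + 1) = m + s + t := by omega
    have h2 : 2*s - 1 + 1 = 2*s := by omega
    rw [hidx]
    -- Pascal identities
    have hc : (m + s + (t+1)).choose (2*s) =
        (m + s + t).choose (2*s - 1) + (m + s + t).choose (2*s) := by
      rw [show m + s + (t+1) = (m + s + t) + 1 by ring, ← h2, Nat.choose_succ_succ]
      simp [Nat.succ_eq_add_one, h2]
    have hr : (2*s+1).choose (t+1) = (2*s).choose t + (2*s).choose (t+1) :=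
      Nat.choose_succ_succ (2*s) t
    rw [hc, hr]
    -- choose recurrences in ℚ
    have hpq := aux_choose (2*s) t
    push_cast at hpq
    have hab := aux_choose (m + s + t) (2*s - 1)
    rw [h2] at hab
    have hcast : ((2*s - 1 : ℕ) : ℚ) = 2*(s:ℚ) - 1 := by
      push_cast [Nat.cast_sub (by omega : 1 ≤ 2*s)]; ring
    rw [hcast] at hab
    push_cast at hab
    have hab' : 2*(s:ℚ) * ((m + s + t).choose (2*s) : ℚ)
        = ((m:ℚ) + s + (t:ℚ) + 1 - 2*s) * ((m + s + t).choose (2*s - 1) : ℚ) := by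
      linarith [hab]
    have hsQ : (s:ℚ) ≠ 0 := by linarith
    have htQ : (t:ℚ) + 1 ≠ 0 := by positivity
    have key := key_step (s:ℚ) (t:ℚ) ((m:ℚ) + s)
      ((m + s + t).choose (2*s) : ℚ) ((m + s + t).choose (2*s - 1) : ℚ)
      ((2*s).choose (t+1) : ℚ) ((2*s).choose t : ℚ) hsQ htQ hpq hab'
    rw [pow_succ]
    push_cast
    field_simp
    linear_combination key
end

section
/- Let s ≥ 1 and m ≥ 0 be integers. Then Σ_{i=0}^{s} (−1)^i C(m+s−1+i, 2s−1) C(2s+1, i) = (−1)^s · [s(2m+2s+1) / ((m+s)(m+s+1))] · C(m+2s, 2s) · C(2s, s), as an identity of rational numbers. -/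
/-- For integers `s ≥ 1`, `m ≥ 0`:
`Σ_{i=0}^{s} (−1)^i C(m+s−1+i, 2s−1) C(2s+1, i)
  = (−1)^s · s(2m+2s+1)/((m+s)(m+s+1)) · C(m+2s, 2s) · C(2s, s)`
as an identity of rational numbers. -/
theorem stmt8 (s m : ℕ) (hs : 1 ≤ s) :
    ∑ i ∈ Finset.range (s + 1),
        (-1 : ℚ)^i * (Nat.choose (m + s - 1 + i) (2*s - 1) : ℚ) * (Nat.choose (2*s+1) i : ℚ) =
      (-1 : ℚ)^s * ((s : ℚ) * (2*m + 2*s + 1) / (((m : ℚ) + s) * ((m : ℚ) + s + 1))) *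
        (Nat.choose (m + 2*s) (2*s) : ℚ) * (Nat.choose (2*s) s : ℚ) := by
  have hsQ : (1:ℚ) ≤ (s:ℚ) := by exact_mod_cast hs
  have hsne : (s:ℚ) ≠ 0 := by positivity
  have hDne : (2*(s:ℚ)*(2*(s:ℚ)+1)*((m:ℚ)+(s:ℚ))*((m:ℚ)+(s:ℚ)+1)) ≠ 0 := by
    have h1 : (0:ℚ) ≤ (m:ℚ) := Nat.cast_nonneg m
    have : (0:ℚ) < (m:ℚ)+(s:ℚ) := by linarith
    have : (0:ℚ) < 2*(s:ℚ) := by linarith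
    positivity
  set f : ℕ → ℚ := fun i =>
    ((i:ℚ) * ((i:ℚ) - (s:ℚ) + (m:ℚ)) * ((i:ℚ) - 2*(s:ℚ)*(m:ℚ) - 2*(s:ℚ)^2 - 2*(s:ℚ) - 1)
      / (2*(s:ℚ)*(2*(s:ℚ)+1)*((m:ℚ)+(s:ℚ))*((m:ℚ)+(s:ℚ)+1)))
    * (-1)^i * ((Nat.choose (2*s+1) i : ℕ) : ℚ) * ((Nat.choose (m+s-1+i) (2*s-1) : ℕ) : ℚ)
    with hf
  have key : ∀ i ∈ Finset.range (s+1),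
      (-1 : ℚ)^i * (Nat.choose (m + s - 1 + i) (2*s - 1) : ℚ) * (Nat.choose (2*s+1) i : ℚ)
        = f (i+1) - f i := by
    intro i hi
    rw [Finset.mem_range] at hi
    have his : i ≤ s := Nat.lt_succ_iff.mp hi
    have e1 : m + s - 1 + (i+1) = m + s + i := by omega
    -- cast helpers
    have hiQ : ((i:ℚ)) ≥ 0 := Nat.cast_nonneg i
    have hisQ : (i:ℚ) ≤ (s:ℚ) := by exact_mod_cast his
    -- relation for choose (2s+1) (i+1)
    have hQ : ((Nat.choose (2*s+1) (i+1) : ℕ) : ℚ) * ((i:ℚ)+1)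
        = ((Nat.choose (2*s+1) i : ℕ) : ℚ) * (2*(s:ℚ)+1-(i:ℚ)) := by
      have h := Nat.choose_succ_right_eq (2*s+1) i
      have hle : i ≤ 2*s+1 := by omega
      have : ((Nat.choose (2*s+1) (i+1) * (i+1) : ℕ) : ℚ)
          = ((Nat.choose (2*s+1) i * (2*s+1-i) : ℕ) : ℚ) := congrArg (Nat.cast : ℕ → ℚ) h
      push_cast [Nat.cast_sub hle] at this
      linarith [this]
    by_cases hcase : s ≤ m + i
    · -- main case: no vanishing
      have hB : ((Nat.choose (m+s+i) (2*s-1) : ℕ) : ℚ) * ((m:ℚ)+(i:ℚ)+1-(s:ℚ))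
          = ((Nat.choose (m+s-1+i) (2*s-1) : ℕ) : ℚ) * ((m:ℚ)+(s:ℚ)+(i:ℚ)) := by
        have h := Nat.choose_mul_succ_eq (m+s-1+i) (2*s-1)
        have e2 : m+s-1+i+1 = m+s+i := by omega
        have e3 : m+s+i - (2*s-1) = m+i+1-s := by omega
        rw [e2, e3] at h
        have : ((Nat.choose (m+s-1+i) (2*s-1) * (m+s+i) : ℕ) : ℚ)
            = ((Nat.choose (m+s+i) (2*s-1) * (m+i+1-s) : ℕ) : ℚ) := congrArg (Nat.cast : ℕ → ℚ) h
        have hle2 : s ≤ m+i+1 := by omega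
        push_cast [Nat.cast_sub hle2] at this
        linarith [this]
      have hd1 : ((i:ℚ)+1) ≠ 0 := by positivity
      have hd2 : ((m:ℚ)+(i:ℚ)+1-(s:ℚ)) ≠ 0 := by
        have : (s:ℚ) ≤ (m:ℚ)+(i:ℚ) := by exact_mod_cast hcase
        intro h; linarith
      have hQ' : ((Nat.choose (2*s+1) (i+1) : ℕ) : ℚ)
          = ((Nat.choose (2*s+1) i : ℕ) : ℚ) * (2*(s:ℚ)+1-(i:ℚ)) / ((i:ℚ)+1) := by
        field_simp at hQ ⊢; linarith [hQ]
      have hB' : ((Nat.choose (m+s+i) (2*s-1) : ℕ) : ℚ)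
          = ((Nat.choose (m+s-1+i) (2*s-1) : ℕ) : ℚ) * ((m:ℚ)+(s:ℚ)+(i:ℚ)) / ((m:ℚ)+(i:ℚ)+1-(s:ℚ)) := by
        field_simp at hB ⊢; linarith [hB]
      simp only [hf, e1, hQ', hB']
      push_cast
      field_simp
      ring
    · -- vanishing case: m + i < s
      push_neg at hcase
      have hA0 : Nat.choose (m+s-1+i) (2*s-1) = 0 := by
        apply Nat.choose_eq_zero_of_lt; omega
      by_cases hc2 : m + i + 1 = s
      · -- R(i+1) = 0 via the factor (i+1 - s + m)
        have hz : ((i:ℚ)+1) - (s:ℚ) + (m:ℚ) = 0 := by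
          have : ((m:ℚ) + (i:ℚ) + 1) = (s:ℚ) := by exact_mod_cast hc2
          linarith
        simp only [hf, e1, hA0]
        push_cast
        rw [hz]
        ring
      · have hB0 : Nat.choose (m+s+i) (2*s-1) = 0 := by
          apply Nat.choose_eq_zero_of_lt; omega
        simp only [hf, e1, hA0, hB0]
        push_cast
        ring
  rw [Finset.sum_congr rfl key, Finset.sum_range_sub]
  have e4 : m + s - 1 + (s+1) = m + 2*s := by omega
  simp only [hf, e4]
  -- f 0 = 0
  have hf0 : (0:ℚ) * ((0:ℚ) - (s:ℚ) + (m:ℚ)) * ((0:ℚ) - 2*(s:ℚ)*(m:ℚ) - 2*(s:ℚ)^2 - 2*(s:ℚ) - 1)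
      / (2*(s:ℚ)*(2*(s:ℚ)+1)*((m:ℚ)+(s:ℚ))*((m:ℚ)+(s:ℚ)+1)) = 0 := by
    simp
  -- relations for the final evaluation
  have hQ2 : (2*(s:ℚ)+1) * ((Nat.choose (2*s) s : ℕ) : ℚ)
      = ((Nat.choose (2*s+1) (s+1) : ℕ) : ℚ) * ((s:ℚ)+1) := by
    have h := Nat.add_one_mul_choose_eq (2*s) s
    exact_mod_cast congrArg (Nat.cast : ℕ → ℚ) h
  have hB2 : ((Nat.choose (m+2*s) (2*s) : ℕ) : ℚ) * (2*(s:ℚ))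
      = ((Nat.choose (m+2*s) (2*s-1) : ℕ) : ℚ) * ((m:ℚ)+1) := by
    have h := Nat.choose_succ_right_eq (m+2*s) (2*s-1)
    have e5 : 2*s-1+1 = 2*s := by omega
    have e6 : m+2*s - (2*s-1) = m+1 := by omega
    rw [e5, e6] at h
    exact_mod_cast congrArg (Nat.cast : ℕ → ℚ) h
  have hd3 : ((s:ℚ)+1) ≠ 0 := by positivity
  have hd4 : ((m:ℚ)+1) ≠ 0 := by positivity
  have hQ2' : ((Nat.choose (2*s+1) (s+1) : ℕ) : ℚ)
      = (2*(s:ℚ)+1) * ((Nat.choose (2*s) s : ℕ) : ℚ) / ((s:ℚ)+1) := by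
    field_simp at hQ2 ⊢; linarith [hQ2]
  have hB2' : ((Nat.choose (m+2*s) (2*s-1) : ℕ) : ℚ)
      = ((Nat.choose (m+2*s) (2*s) : ℕ) : ℚ) * (2*(s:ℚ)) / ((m:ℚ)+1) := by
    field_simp at hB2 ⊢; linarith [hB2]
  rw [hQ2', hB2']
  push_cast
  field_simp
  ring
end

section
/- (Lemma 4) Let s ≥ 1 be an integer and let x ∈ ℝ with 0 < x < 1. Then s · C(2s, s) · Σ_{m=0}^{∞} C(m+2s, 2s) · (2m+2s+1) x^{m+s} / ((m+s)(m+s+1)) = (Σ_{k=0}^{s} (−1)^k C(2s+1, s+k+1) x^{s+k}) / (1 − x)^{2s}, the series on the left converging. -/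
open Finset
private lemma ratio1 (s k : ℕ) (hk : k ≤ s) :
    ((s:ℝ) + k + 2) * ((2*s+1).choose (s+k+2) : ℝ)
      = ((s:ℝ) - k) * ((2*s+1).choose (s+k+1) : ℝ) := by
  have h := Nat.choose_succ_right_eq (2*s+1) (s+k+1)
  have e1 : s+k+1+1 = s+k+2 := by omega
  have e2 : 2*s+1 - (s+k+1) = s - k := by omega
  rw [e1, e2] at h
  have h2 := congrArg (fun n : ℕ => (n : ℝ)) h
  push_cast [Nat.cast_sub hk] at h2
  linarith [h2]

private lemma ratio2 (s m k : ℕ) (hs : 1 ≤ s) (hk : k ≤ s) :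
    ((m:ℝ) + 2*s - 1 - k) * ((m + 2*s - 2 - k).choose (2*s-1) : ℝ)
      = ((m:ℝ) - k) * ((m + 2*s - 1 - k).choose (2*s-1) : ℝ) := by
  rcases le_or_gt k m with h | h
  · have h1 := Nat.choose_mul_succ_eq (m + 2*s - 2 - k) (2*s-1)
    have e1 : m + 2*s - 2 - k + 1 = m + 2*s - 1 - k := by omega
    have e2 : m + 2*s - 1 - k - (2*s-1) = m - k := by omega
    rw [e1, e2] at h1
    have h2 := congrArg (fun n : ℕ => (n : ℝ)) h1
    push_cast [Nat.cast_sub h, Nat.cast_sub (show k ≤ m + 2*s - 1 by omega),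
      Nat.cast_sub (show 1 ≤ m + 2*s by omega)] at h2
    linarith [h2]
  · have z1 : (m + 2*s - 1 - k).choose (2*s-1) = 0 :=
      Nat.choose_eq_zero_of_lt (by omega)
    have z2 : (m + 2*s - 2 - k).choose (2*s-1) = 0 :=
      Nat.choose_eq_zero_of_lt (by omega)
    rw [z1, z2]
    push_cast
    ring

private lemma coeff_id (s m : ℕ) (hs : 1 ≤ s) :
    ∑ k ∈ Finset.range (s+1),
        (-1:ℝ)^k * ((2*s+1).choose (s+k+1) : ℝ) * ((m + 2*s - 1 - k).choose (2*s-1) : ℝ)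
      = (s:ℝ) * ((2*s).choose s : ℝ) *
          (((m + 2*s).choose (2*s) : ℝ) * (2*(m:ℝ) + 2*(s:ℝ) + 1) /
            (((m:ℝ) + s) * ((m:ℝ) + s + 1))) := by
  set f : ℕ → ℝ := fun k =>
    -(((s:ℝ)+k+1) * ((m:ℝ)+2*s-k) * ((s:ℝ)*(2*((m:ℝ)+s)+1)+k)) *
      ((-1:ℝ)^k * ((2*s+1).choose (s+k+1) : ℝ) * ((m + 2*s - 1 - k).choose (2*s-1) : ℝ))
    with hf
  have hs1 : (1:ℝ) ≤ (s:ℝ) := by exact_mod_cast hs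
  have hC : (2*(s:ℝ)*((m:ℝ)+s)*((m:ℝ)+s+1)*(2*(s:ℝ)+1)) ≠ 0 := by positivity
  apply mul_left_cancel₀ hC
  rw [Finset.mul_sum]
  have tele : ∀ k ∈ Finset.range (s+1),
      (2*(s:ℝ)*((m:ℝ)+s)*((m:ℝ)+s+1)*(2*(s:ℝ)+1)) *
        ((-1:ℝ)^k * ((2*s+1).choose (s+k+1) : ℝ) * ((m + 2*s - 1 - k).choose (2*s-1) : ℝ))
      = f (k+1) - f k := by
    intro k hk
    have hk' : k ≤ s := by simpa [Nat.lt_succ_iff] using hk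
    have r1 := ratio1 s k hk'
    have r2 := ratio2 s m k hs hk'
    rw [hf]
    simp only
    have e1 : s+(k+1)+1 = s+k+2 := by omega
    have e2 : m + 2*s - 1 - (k+1) = m + 2*s - 2 - k := by omega
    rw [e1, e2]
    push_cast
    linear_combination
      ((-1:ℝ)^k * ((s:ℝ)*(2*((m:ℝ)+s)+1)+(k:ℝ)+1)) *
        (-(((m:ℝ)+2*s-1-(k:ℝ)) * ((m + 2*s - 2 - k).choose (2*s-1) : ℝ))) * r1 +
      ((-1:ℝ)^k * ((s:ℝ)*(2*((m:ℝ)+s)+1)+(k:ℝ)+1)) *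
        (-((((s:ℝ)-(k:ℝ)) * ((2*s+1).choose (s+k+1) : ℝ)))) * r2
  rw [Finset.sum_congr rfl tele, Finset.sum_range_sub]
  have ftop : f (s+1) = 0 := by
    have hz : (2*s+1).choose (s+(s+1)+1) = 0 := Nat.choose_eq_zero_of_lt (by omega)
    rw [hf]; simp only [hz]; push_cast; ring
  rw [ftop]
  have N1 := Nat.add_one_mul_choose_eq (2*s) s
  have cN1 : (2*(s:ℝ)+1) * ((2*s).choose s : ℝ) = ((2*s+1).choose (s+1) : ℝ) * ((s:ℝ)+1) := by
    have h2 := congrArg (fun n : ℕ => (n : ℝ)) N1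
    push_cast [Nat.succ_eq_add_one] at h2
    linarith [h2]
  have N2 := Nat.add_one_mul_choose_eq (m + 2*s - 1) (2*s - 1)
  have e3 : m + 2*s - 1 + 1 = m + 2*s := by omega
  have e4 : 2*s - 1 + 1 = 2*s := by omega
  rw [e3, e4] at N2
  have cN2 : ((m:ℝ)+2*s) * ((m + 2*s - 1).choose (2*s-1) : ℝ)
      = ((m + 2*s).choose (2*s) : ℝ) * (2*(s:ℝ)) := by
    have h2 := congrArg (fun n : ℕ => (n : ℝ)) N2
    push_cast at h2
    linarith [h2]
  have hms : ((m:ℝ)+s) ≠ 0 := by positivity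
  have hms1 : ((m:ℝ)+s+1) ≠ 0 := by positivity
  rw [hf]
  simp only
  have e5 : m + 2*s - 1 - 0 = m + 2*s - 1 := by omega
  have e6 : s + 0 + 1 = s + 1 := by omega
  rw [e5, e6]
  push_cast
  have expand : (2*(s:ℝ)*((m:ℝ)+s)*((m:ℝ)+s+1)*(2*(s:ℝ)+1)) *
      ((s:ℝ) * ((2*s).choose s : ℝ) *
        (((m + 2*s).choose (2*s) : ℝ) * (2*(m:ℝ) + 2*(s:ℝ) + 1) /
          (((m:ℝ) + s) * ((m:ℝ) + s + 1))))
      = 2*(s:ℝ)*(2*(s:ℝ)+1)*(s:ℝ)*((2*s).choose s : ℝ)*((m + 2*s).choose (2*s) : ℝ)*(2*(m:ℝ)+2*(s:ℝ)+1) := by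
    field_simp
  rw [expand]
  linear_combination (s:ℝ)*(2*(m:ℝ)+2*(s:ℝ)+1)*
      ( (-(((m:ℝ)+2*(s:ℝ))*((m + 2*s - 1).choose (2*s-1) : ℝ))) * cN1
        + ((2*(s:ℝ)+1)*((2*s).choose s : ℝ)) * cN2 )

/-- (Lemma 4) For an integer `s ≥ 1` and `0 < x < 1`:
`s C(2s,s) Σ_{m=0}^{∞} C(m+2s, 2s) (2m+2s+1) x^(m+s) / ((m+s)(m+s+1))
  = (Σ_{k=0}^{s} (−1)^k C(2s+1, s+k+1) x^(s+k)) / (1 − x)^(2s)`,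
the series on the left converging. -/
theorem stmt9 (s : ℕ) (hs : 1 ≤ s) (x : ℝ) (hx0 : 0 < x) (hx1 : x < 1) :
    Summable (fun m : ℕ =>
      (Nat.choose (m + 2*s) (2*s) : ℝ) * (2*(m:ℝ) + 2*s + 1) * x ^ (m + s) /
        (((m:ℝ) + s) * ((m:ℝ) + s + 1))) ∧
    (s : ℝ) * (Nat.choose (2*s) s : ℝ) *
        ∑' m : ℕ, (Nat.choose (m + 2*s) (2*s) : ℝ) * (2*(m:ℝ) + 2*s + 1) * x ^ (m + s) /
          (((m:ℝ) + s) * ((m:ℝ) + s + 1)) =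
      (∑ k ∈ Finset.range (s + 1),
          (-1:ℝ)^k * (Nat.choose (2*s+1) (s + k + 1) : ℝ) * x ^ (s + k)) /
        (1 - x) ^ (2*s) := by
  have hx : ‖x‖ < 1 := by
    rw [Real.norm_eq_abs, abs_lt]; constructor <;> linarith
  have base : HasSum (fun j : ℕ => ((j + (2*s-1)).choose (2*s-1) : ℝ) * x ^ j)
      (1 / (1-x)^(2*s)) := by
    have h := hasSum_choose_mul_geometric_of_norm_lt_one (2*s-1) hx
    have e : 2*s - 1 + 1 = 2*s := by omega
    rwa [e] at h
  have key : ∀ k, k ≤ s →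
      HasSum (fun m : ℕ => ((m + 2*s - 1 - k).choose (2*s-1) : ℝ) * x ^ (m + s))
        (x^(s+k) * (1/(1-x)^(2*s))) := by
    intro k hk
    have comp : HasSum
        ((fun m : ℕ => ((m + 2*s - 1 - k).choose (2*s-1) : ℝ) * x ^ (m + s)) ∘ (fun j => j + k))
        (x^(s+k) * (1/(1-x)^(2*s))) := by
      have h := base.mul_left (x^(s+k))
      convert h using 1
      · rfl
      funext j
      simp only [Function.comp]
      have e : j + k + 2*s - 1 - k = j + (2*s - 1) := by omega
      rw [e, show j + k + s = s + k + j from by omega, pow_add]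
      ring
    have vanish : ∀ m ∉ Set.range (fun j : ℕ => j + k),
        ((m + 2*s - 1 - k).choose (2*s-1) : ℝ) * x ^ (m + s) = 0 := by
      intro m hm
      have hmk : m < k := by
        by_contra hcon
        exact hm ⟨m - k, by simp only []; omega⟩
      have hz : (m + 2*s - 1 - k).choose (2*s-1) = 0 := Nat.choose_eq_zero_of_lt (by omega)
      rw [hz]; simp
    exact (Function.Injective.hasSum_iff (fun a b hab => by omega) vanish).mp comp
  have hsum2 : HasSum
      (fun m : ℕ => ∑ k ∈ Finset.range (s+1),
        ((-1:ℝ)^k * ((2*s+1).choose (s+k+1) : ℝ)) *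
          (((m + 2*s - 1 - k).choose (2*s-1) : ℝ) * x^(m+s)))
      (∑ k ∈ Finset.range (s+1),
        ((-1:ℝ)^k * ((2*s+1).choose (s+k+1) : ℝ)) * (x^(s+k) * (1/(1-x)^(2*s)))) :=
    hasSum_sum (fun k hk => (key k (by simpa [Nat.lt_succ_iff] using hk)).mul_left _)
  have hterm : ∀ m : ℕ,
      (∑ k ∈ Finset.range (s+1),
        ((-1:ℝ)^k * ((2*s+1).choose (s+k+1) : ℝ)) *
          (((m + 2*s - 1 - k).choose (2*s-1) : ℝ) * x^(m+s)))
      = (s:ℝ) * ((2*s).choose s : ℝ) *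
          ((Nat.choose (m + 2*s) (2*s) : ℝ) * (2*(m:ℝ) + 2*s + 1) * x ^ (m + s) /
            (((m:ℝ) + s) * ((m:ℝ) + s + 1))) := by
    intro m
    have h1 : ∀ k ∈ Finset.range (s+1),
        ((-1:ℝ)^k * ((2*s+1).choose (s+k+1):ℝ)) *
            (((m + 2*s - 1 - k).choose (2*s-1) : ℝ) * x^(m+s))
          = ((-1:ℝ)^k * ((2*s+1).choose (s+k+1):ℝ) * ((m + 2*s - 1 - k).choose (2*s-1):ℝ))
              * x^(m+s) := by
      intro k _; ring
    rw [Finset.sum_congr rfl h1, ← Finset.sum_mul, coeff_id s m hs]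
    ring
  have hsum3 : HasSum
      (fun m : ℕ => (s:ℝ) * ((2*s).choose s : ℝ) *
        ((Nat.choose (m + 2*s) (2*s) : ℝ) * (2*(m:ℝ) + 2*s + 1) * x ^ (m + s) /
            (((m:ℝ) + s) * ((m:ℝ) + s + 1))))
      (∑ k ∈ Finset.range (s+1),
        ((-1:ℝ)^k * ((2*s+1).choose (s+k+1) : ℝ)) * (x^(s+k) * (1/(1-x)^(2*s)))) := by
    simpa only [hterm] using hsum2
  set T : ℝ := ∑ k ∈ Finset.range (s+1),
      ((-1:ℝ)^k * ((2*s+1).choose (s+k+1) : ℝ)) * (x^(s+k) * (1/(1-x)^(2*s))) with hTdef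
  have hc : (s:ℝ) * ((2*s).choose s : ℝ) ≠ 0 := by
    apply mul_ne_zero
    · exact Nat.cast_ne_zero.mpr (by omega)
    · exact Nat.cast_ne_zero.mpr (Nat.choose_pos (by omega)).ne'
  have hT : (s:ℝ) * ((2*s).choose s : ℝ) * (T / ((s:ℝ) * ((2*s).choose s : ℝ))) = T := by
    field_simp
    exact mul_div_cancel_left₀ T (Nat.cast_ne_zero.mpr (Nat.choose_pos (by omega)).ne')
  have h4 : HasSum
      (fun m : ℕ => (s:ℝ) * ((2*s).choose s : ℝ) *
        ((Nat.choose (m + 2*s) (2*s) : ℝ) * (2*(m:ℝ) + 2*s + 1) * x ^ (m + s) /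
            (((m:ℝ) + s) * ((m:ℝ) + s + 1))))
      ((s:ℝ) * ((2*s).choose s : ℝ) * (T / ((s:ℝ) * ((2*s).choose s : ℝ)))) := by
    rw [hT]; exact hsum3
  have horig : HasSum
      (fun m : ℕ => (Nat.choose (m + 2*s) (2*s) : ℝ) * (2*(m:ℝ) + 2*s + 1) * x ^ (m + s) /
        (((m:ℝ) + s) * ((m:ℝ) + s + 1)))
      (T / ((s:ℝ) * ((2*s).choose s : ℝ))) := (hasSum_mul_left_iff hc).mp h4
  refine ⟨horig.summable, ?_⟩
  rw [horig.tsum_eq, hT]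
  have h5 : ∀ k ∈ Finset.range (s+1),
      ((-1:ℝ)^k * ((2*s+1).choose (s+k+1) : ℝ)) * (x^(s+k) * (1/(1-x)^(2*s)))
        = ((-1:ℝ)^k * ((2*s+1).choose (s+k+1) : ℝ) * x^(s+k)) * (1/(1-x)^(2*s)) := by
    intro k _; ring
  rw [hTdef, Finset.sum_congr rfl h5, ← Finset.sum_mul, mul_one_div]
end

section
/- Let n ≥ 1, s ≥ 1 be integers, ρ > 1, M ≥ 0, and let (α_k)_{k∈ℕ} be complex numbers with |α_k| ≤ 2M ρ^{−k} for all k. Then the series Σ_{m=0}^{∞} α_{(2s+1)n + 2mn} ε_m converges absolutely and |Σ_{m=0}^{∞} α_{(2s+1)n + 2mn} ε_m| ≤ 2πM · (Σ_{k=0}^{s} (−1)^k C(2s+1, s−k) ρ^{2n(s−k)}) / (ρ^n (ρ^{2n} − 1)^{2s}). -/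
open Real

/-- `ε_m = π (−1)^m [s(2m+2s+1) / ((m+s)(m+s+1))] C(m+2s, 2s) C(2s, s)`. -/
noncomputable def epsCoef (s m : ℕ) : ℝ :=
  π * (-1)^m * ((s : ℝ) * (2*(m:ℝ) + 2*s + 1) / (((m:ℝ) + s) * ((m:ℝ) + s + 1))) *
    (Nat.choose (m + 2*s) (2*s) : ℝ) * (Nat.choose (2*s) s : ℝ)

open Real Polynomial Finset
open scoped fwdDiff

private lemma fwdDiff_poly (P : Polynomial ℝ) :
    Δ_[(1:ℝ)] (fun x => P.eval x) = fun x => (P.comp (X + C 1) - P).eval x := by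
  funext x
  simp [fwdDiff, eval_comp, add_comm]

private lemma degree_comp_sub_lt (P : Polynomial ℝ) (hP : 0 < P.degree) :
    (P.comp (X + C 1) - P).degree < P.degree := by
  have hP0 : P ≠ 0 := fun h => by simp [h] at hP
  have hq1 : (X + C (1:ℝ)).natDegree = 1 := natDegree_X_add_C 1
  have hq2 : (X + C (1:ℝ)).leadingCoeff = 1 := (monic_X_add_C 1).leadingCoeff
  have hlc : (P.comp (X + C 1)).leadingCoeff = P.leadingCoeff := by
    rw [leadingCoeff_comp (by rw [hq1]; norm_num), hq2, one_pow, mul_one]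
  have hc0 : P.comp (X + C 1) ≠ 0 := by
    rw [← leadingCoeff_ne_zero, hlc, leadingCoeff_ne_zero]; exact hP0
  have hdeg : (P.comp (X + C 1)).degree = P.degree := by
    rw [degree_eq_natDegree hc0, degree_eq_natDegree hP0, natDegree_comp, hq1, mul_one]
  have := degree_sub_lt hdeg hc0 hlc
  rwa [hdeg] at this

private lemma fwdDiff_iter_poly_zero : ∀ (N : ℕ) (P : Polynomial ℝ), P.degree < N →
    (Δ_[(1:ℝ)])^[N] (fun x => P.eval x) = fun _ => 0 := by
  intro N
  induction N with
  | zero =>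
    intro P hP
    have : P = 0 := by
      by_contra h
      rw [degree_eq_natDegree h] at hP
      exact absurd hP (by simp)
    simp [this]
  | succ N ih =>
    intro P hP
    rw [Function.iterate_succ_apply, fwdDiff_poly]
    by_cases h0 : P.degree ≤ 0
    · have hC : P.comp (X + C 1) - P = 0 := by
        have hc := degree_le_zero_iff.mp h0
        rw [hc]; simp
      rw [hC]
      have := ih 0 (by simp [degree_zero])
      simpa using this
    · push_neg at h0
      apply ih
      calc (P.comp (X + C 1) - P).degree < P.degree := degree_comp_sub_lt P h0
        _ ≤ (N : WithBot ℕ) := by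
          have h1 : P ≠ 0 := fun h => by simp [h] at h0
          rw [degree_eq_natDegree h1] at hP ⊢
          exact_mod_cast Nat.lt_succ_iff.mp (by exact_mod_cast hP)

private lemma alt_sum_poly (P : Polynomial ℝ) (N : ℕ) (hP : P.degree < N) (x : ℝ) :
    ∑ j ∈ range (N+1), (-1:ℝ)^j * (N.choose j) * P.eval (x - j) = 0 := by
  have h := fwdDiff_iter_eq_sum_shift (1:ℝ) (fun t => P.eval t) N (x - N)
  rw [fwdDiff_iter_poly_zero N P hP] at h
  rw [← Finset.sum_range_reflect]
  rw [show (0:ℝ) = ∑ k ∈ range (N+1), ((-1:ℤ)^(N-k) * (N.choose k : ℤ)) • P.eval (x - N + k • (1:ℝ)) from h]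
  apply Finset.sum_congr rfl
  intro k hk
  have hkN : k ≤ N := Nat.lt_succ_iff.mp (mem_range.mp hk)
  simp only [Nat.add_sub_cancel]
  rw [Nat.choose_symm hkN]
  have harg : x - (↑N : ℝ) + k • (1:ℝ) = x - ((N - k : ℕ) : ℝ) := by
    push_cast [Nat.cast_sub hkN, nsmul_eq_mul]; ring
  rw [harg]
  simp only [zsmul_eq_mul]
  push_cast [Nat.cast_sub hkN]
  ring

noncomputable def PA (s : ℕ) : Polynomial ℝ :=
  (∏ i ∈ range s, (X + C ((s:ℝ)+1+i))) * (∏ i ∈ range (s-1), (X + C (1+(i:ℝ)))) +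
  (∏ i ∈ range (s-1), (X + C ((s:ℝ)+2+i))) * (∏ i ∈ range s, (X + C (1+(i:ℝ))))

private lemma degree_linprod (k : ℕ) (f : ℕ → ℝ) :
    (∏ i ∈ range k, (X + C (f i))).degree = (k : WithBot ℕ) := by
  rw [degree_prod]
  simp [degree_X_add_C]

private lemma PA_degree (s : ℕ) (hs : 1 ≤ s) : (PA s).degree < (2*s : ℕ) := by
  have h1 : ((∏ i ∈ range s, (X + C ((s:ℝ)+1+i))) * (∏ i ∈ range (s-1), (X + C (1+(i:ℝ))))).degree
      = ((s + (s-1) : ℕ) : WithBot ℕ) := by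
    rw [degree_mul, degree_linprod, degree_linprod]
    exact_mod_cast rfl
  have h2 : ((∏ i ∈ range (s-1), (X + C ((s:ℝ)+2+i))) * (∏ i ∈ range s, (X + C (1+(i:ℝ))))).degree
      = ((s - 1 + s : ℕ) : WithBot ℕ) := by
    rw [degree_mul, degree_linprod, degree_linprod]
    exact_mod_cast rfl
  apply lt_of_le_of_lt (degree_add_le _ _)
  rw [h1, h2]
  exact max_lt (by exact_mod_cast (by omega : s + (s-1) < 2*s))
    (by exact_mod_cast (by omega : s - 1 + s < 2*s))

private lemma prod_asc (a k m : ℕ) :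
    (∏ i ∈ range k, ((m:ℝ) + a + i)) = ((m + a).ascFactorial k : ℕ) := by
  induction k with
  | zero => simp
  | succ k ih =>
    rw [Finset.prod_range_succ, ih, Nat.ascFactorial_succ]
    push_cast
    ring

private lemma asc_split (n a b : ℕ) :
    n.ascFactorial (a + b) = n.ascFactorial a * (n + a).ascFactorial b := by
  induction b with
  | zero => simp
  | succ b ih =>
    rw [show a + (b+1) = (a+b)+1 from rfl, Nat.ascFactorial_succ, ih, Nat.ascFactorial_succ]
    ring

private lemma PA_eval_nat (s m : ℕ) (hs : 1 ≤ s) :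
    (PA s).eval (m:ℝ) * (((m:ℝ)+s) * ((m:ℝ)+s+1)) =
      (2*(m:ℝ)+2*s+1) * (((m+1).ascFactorial (2*s) : ℕ) : ℝ) := by
  obtain ⟨t, rfl⟩ : ∃ t, s = t + 1 := ⟨s-1, by omega⟩
  have e1 : (PA (t+1)).eval (m:ℝ) =
      (((m+(t+2)).ascFactorial (t+1) : ℕ) : ℝ) * (((m+1).ascFactorial t : ℕ) : ℝ)
      + (((m+(t+3)).ascFactorial t : ℕ) : ℝ) * (((m+1).ascFactorial (t+1) : ℕ) : ℝ) := by
    rw [PA]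
    simp only [Nat.add_sub_cancel, eval_add, eval_mul, eval_prod, eval_X, eval_C]
    rw [← prod_asc (t+2) (t+1) m, ← prod_asc 1 t m, ← prod_asc (t+3) t m, ← prod_asc 1 (t+1) m]
    congr 1
    · congr 1
      · exact Finset.prod_congr rfl fun i _ => by push_cast; ring
      · exact Finset.prod_congr rfl fun i _ => by push_cast; ring
    · congr 1
      · exact Finset.prod_congr rfl fun i _ => by push_cast; ring
      · exact Finset.prod_congr rfl fun i _ => by push_cast; ring
  have h1 : (m+1).ascFactorial (t+1) = (m+t+1) * (m+1).ascFactorial t := by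
    rw [Nat.ascFactorial_succ]; ring
  have h2 : (m+1).ascFactorial (2*(t+1)) =
      (m+1).ascFactorial (t+1) * (m+(t+2)).ascFactorial (t+1) := by
    rw [show 2*(t+1) = (t+1)+(t+1) from by ring, asc_split,
      show m+1+(t+1) = m+(t+2) from by ring]
  have h3 : (m+(t+2)).ascFactorial (t+1) = (m+(t+2)) * (m+(t+3)).ascFactorial t := by
    rw [show t+1 = 1+t from by ring, asc_split,
      show Nat.ascFactorial (m+(t+2)) 1 = m+(t+2) from by simp [Nat.ascFactorial_succ],
      show m+(t+2)+1 = m+(t+3) from by ring]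
  have fact1 : (m+t+1) * ((m+(t+2)).ascFactorial (t+1) * (m+1).ascFactorial t)
      = (m+1).ascFactorial (2*(t+1)) := by
    rw [h2, h1]; ring
  have fact2 : (m+(t+2)) * ((m+(t+3)).ascFactorial t * (m+1).ascFactorial (t+1))
      = (m+1).ascFactorial (2*(t+1)) := by
    rw [h2, h3]; ring
  have c1 : ((m:ℝ)+t+1) * ((((m+(t+2)).ascFactorial (t+1) : ℕ) : ℝ) * (((m+1).ascFactorial t : ℕ) : ℝ))
      = (((m+1).ascFactorial (2*(t+1)) : ℕ) : ℝ) := by exact_mod_cast fact1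
  have c2 : ((m:ℝ)+t+2) * ((((m+(t+3)).ascFactorial t : ℕ) : ℝ) * (((m+1).ascFactorial (t+1) : ℕ) : ℝ))
      = (((m+1).ascFactorial (2*(t+1)) : ℕ) : ℝ) := by exact_mod_cast fact2
  rw [e1]
  push_cast
  linear_combination ((m:ℝ)+t+2) * c1 + ((m:ℝ)+t+1) * c2

private lemma prod_fact_real (k : ℕ) : (∏ i ∈ range k, ((i:ℝ) + 1)) = (k.factorial : ℝ) := by
  rw [← Finset.prod_range_add_one_eq_factorial k, Nat.cast_prod]
  exact Finset.prod_congr rfl fun i _ => by push_cast; ring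

private lemma prod_desc_real (k : ℕ) :
    (∏ i ∈ range k, ((i:ℝ) - k)) = (-1)^k * (k.factorial : ℝ) := by
  have h1 : ∀ i ∈ range k, ((i:ℝ) - k) = -1 * (((k - i : ℕ) : ℝ)) := by
    intro i hi
    have hik := Finset.mem_range.mp hi
    push_cast [Nat.cast_sub hik.le]
    ring
  rw [Finset.prod_congr rfl h1, Finset.prod_mul_distrib, Finset.prod_const, Finset.card_range]
  have hn : (∏ i ∈ range k, ((k - i : ℕ) : ℝ)) = (k.factorial : ℝ) := by
    rw [← Nat.cast_prod]
    congr 1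
    rw [← Finset.prod_range_add_one_eq_factorial k, ← Finset.prod_range_reflect (fun j => j+1) k]
    exact Finset.prod_congr rfl fun i hi => by
      have := Finset.mem_range.mp hi; omega
  rw [hn]

private lemma PA_eval_neg_zero (s v : ℕ) (hs : 1 ≤ s) (h1 : 1 ≤ v) (h2 : v ≤ 2*s)
    (hv1 : v ≠ s) (hv2 : v ≠ s+1) : (PA s).eval (-(v:ℝ)) = 0 := by
  simp only [PA, eval_add, eval_mul, eval_prod, eval_X, eval_C]
  rcases lt_or_gt_of_ne hv1 with hlt | hgt
  · have hq2 : (∏ i ∈ range (s-1), (-(v:ℝ) + (1 + (i:ℝ)))) = 0 :=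
      Finset.prod_eq_zero (Finset.mem_range.mpr (by omega : v - 1 < s - 1))
        (by push_cast [Nat.cast_sub h1]; ring)
    have hq4 : (∏ i ∈ range s, (-(v:ℝ) + (1 + (i:ℝ)))) = 0 :=
      Finset.prod_eq_zero (Finset.mem_range.mpr (by omega : v - 1 < s))
        (by push_cast [Nat.cast_sub h1]; ring)
    rw [hq2, hq4]; ring
  · have hv : s + 2 ≤ v := by omega
    have hq1 : (∏ i ∈ range s, (-(v:ℝ) + ((s:ℝ)+1+(i:ℝ)))) = 0 :=
      Finset.prod_eq_zero (Finset.mem_range.mpr (by omega : v - s - 1 < s))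
        (by push_cast [Nat.cast_sub (show 1 ≤ v - s by omega), Nat.cast_sub (show s ≤ v by omega)]; ring)
    have hq3 : (∏ i ∈ range (s-1), (-(v:ℝ) + ((s:ℝ)+2+(i:ℝ)))) = 0 :=
      Finset.prod_eq_zero (Finset.mem_range.mpr (by omega : v - s - 2 < s - 1))
        (by push_cast [Nat.cast_sub (show 2 ≤ v - s by omega), Nat.cast_sub (show s ≤ v by omega)]; ring)
    rw [hq1, hq3]; ring

private lemma PA_eval_neg_s (s : ℕ) (hs : 1 ≤ s) :
    (PA s).eval (-(s:ℝ)) = (-1)^(s-1) * ((s.factorial : ℕ) : ℝ) * (((s-1).factorial : ℕ) : ℝ) := by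
  obtain ⟨t, rfl⟩ : ∃ t, s = t+1 := ⟨s-1, by omega⟩
  simp only [PA, eval_add, eval_mul, eval_prod, eval_X, eval_C, Nat.add_sub_cancel]
  have hq1 : (∏ i ∈ range (t+1), (-(((t+1:ℕ)):ℝ) + (((t+1:ℕ):ℝ)+1+(i:ℝ)))) = (((t+1).factorial : ℕ) : ℝ) := by
    rw [← prod_fact_real (t+1)]
    exact Finset.prod_congr rfl fun i _ => by push_cast; ring
  have hq2 : (∏ i ∈ range t, (-(((t+1:ℕ)):ℝ) + (1 + (i:ℝ)))) = (-1)^t * ((t.factorial : ℕ) : ℝ) := by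
    rw [← prod_desc_real t]
    exact Finset.prod_congr rfl fun i _ => by push_cast; ring
  have hq4 : (∏ i ∈ range (t+1), (-(((t+1:ℕ)):ℝ) + (1 + (i:ℝ)))) = 0 :=
    Finset.prod_eq_zero (Finset.mem_range.mpr (by omega : t < t + 1))
      (by push_cast; ring)
  rw [hq1, hq2, hq4]
  ring

private lemma PA_eval_neg_s1 (s : ℕ) (hs : 1 ≤ s) :
    (PA s).eval (-(((s+1:ℕ)):ℝ)) = (-1)^s * ((s.factorial : ℕ) : ℝ) * (((s-1).factorial : ℕ) : ℝ) := by
  obtain ⟨t, rfl⟩ : ∃ t, s = t+1 := ⟨s-1, by omega⟩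
  simp only [PA, eval_add, eval_mul, eval_prod, eval_X, eval_C, Nat.add_sub_cancel]
  have hq1 : (∏ i ∈ range (t+1), (-(((t+1+1:ℕ)):ℝ) + (((t+1:ℕ):ℝ)+1+(i:ℝ)))) = 0 :=
    Finset.prod_eq_zero (Finset.mem_range.mpr (by omega : 0 < t + 1))
      (by push_cast; ring)
  have hq3 : (∏ i ∈ range t, (-(((t+1+1:ℕ)):ℝ) + (((t+1:ℕ):ℝ)+2+(i:ℝ)))) = ((t.factorial : ℕ) : ℝ) := by
    rw [← prod_fact_real t]
    exact Finset.prod_congr rfl fun i _ => by push_cast; ring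
  have hq4 : (∏ i ∈ range (t+1), (-(((t+1+1:ℕ)):ℝ) + (1 + (i:ℝ)))) = (-1)^(t+1) * (((t+1).factorial : ℕ) : ℝ) := by
    rw [← prod_desc_real (t+1)]
    exact Finset.prod_congr rfl fun i _ => by push_cast; ring
  rw [hq1, hq3, hq4]
  ring

private lemma coeff_id_s10 (s m : ℕ) (hs : 1 ≤ s) :
    (∑ j ∈ range (2*s+1), if j ≤ m then
        (-1:ℝ)^j * (((2*s).choose j : ℕ) : ℝ) * (PA s).eval (((m-j : ℕ)):ℝ) else 0)
    = (if m ≤ s then (-1:ℝ)^m * (((2*s+1).choose (s-m) : ℕ) : ℝ)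
        * (((s.factorial : ℕ) : ℝ) * (((s-1).factorial : ℕ) : ℝ)) else 0) := by
  set K : ℝ := ((s.factorial : ℕ) : ℝ) * (((s-1).factorial : ℕ) : ℝ) with hK
  set c1 : ℝ := (-1:ℝ)^(m+s) * (((2*s).choose (m+s) : ℕ) : ℝ) * ((-1:ℝ)^(s-1) * K) with hc1
  set c2 : ℝ := (-1:ℝ)^(m+s+1) * (((2*s).choose (m+s+1) : ℕ) : ℝ) * ((-1:ℝ)^s * K) with hc2
  have hz := alt_sum_poly (PA s) (2*s) (PA_degree s hs) (m:ℝ)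
  have hsplit : ∀ j ∈ range (2*s+1),
      (-1:ℝ)^j * (((2*s).choose j : ℕ) : ℝ) * (PA s).eval ((m:ℝ) - j)
      = (if j ≤ m then (-1:ℝ)^j * (((2*s).choose j : ℕ) : ℝ) * (PA s).eval (((m-j : ℕ)):ℝ) else 0)
        + ((if j = m+s then c1 else 0) + (if j = m+s+1 then c2 else 0)) := by
    intro j hj
    have hj2s : j ≤ 2*s := Nat.lt_succ_iff.mp (mem_range.mp hj)
    by_cases hjm : j ≤ m
    · rw [if_pos hjm, if_neg (by omega), if_neg (by omega),
        show (m:ℝ) - j = ((m-j:ℕ):ℝ) from by push_cast [Nat.cast_sub hjm]; ring]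
      ring
    · push_neg at hjm
      rw [if_neg (by omega)]
      have harg : (m:ℝ) - j = -(((j - m : ℕ)):ℝ) := by
        push_cast [Nat.cast_sub hjm.le]; ring
      rw [harg]
      by_cases he1 : j = m + s
      · rw [if_pos he1, if_neg (by omega), he1, show m + s - m = s from by omega,
          PA_eval_neg_s s hs, hc1]
        ring
      · by_cases he2 : j = m + s + 1
        · rw [if_neg he1, if_pos he2, he2, show m + s + 1 - m = s + 1 from by omega,
            PA_eval_neg_s1 s hs, hc2]
          ring
        · rw [if_neg he1, if_neg he2,
            PA_eval_neg_zero s (j-m) hs (by omega) (by omega) (by omega) (by omega)]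
          ring
  rw [Finset.sum_congr rfl hsplit] at hz
  rw [Finset.sum_add_distrib, Finset.sum_add_distrib, Finset.sum_ite_eq' (range (2*s+1)),
    Finset.sum_ite_eq' (range (2*s+1))] at hz
  by_cases hms : m ≤ s
  · rw [if_pos hms]
    rw [if_pos (by simp [Finset.mem_range]; omega : m + s ∈ range (2*s+1))] at hz
    obtain ⟨t, rfl⟩ : ∃ t, s = t + 1 := ⟨s-1, by omega⟩
    have hsq : ((-1:ℝ)^t) * ((-1:ℝ)^t) = 1 := by
      rw [← pow_add, ← two_mul, pow_mul]; norm_num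
    have hsq2 : ((-1:ℝ)^m) * ((-1:ℝ)^m) = 1 := by
      rw [← pow_add, ← two_mul, pow_mul]; norm_num
    by_cases hlt : m + (t+1) + 1 ∈ range (2*(t+1)+1)
    · rw [if_pos hlt] at hz
      have hmlt : m < t + 1 := by simp [Finset.mem_range] at hlt; omega
      have hP : (2*(t+1)).choose (m+(t+1)) + (2*(t+1)).choose (m+(t+1)+1)
          = (2*(t+1)+1).choose ((t+1)-m) := by
        rw [show (2*(t+1)+1).choose ((t+1)-m)
            = (2*(t+1)+1).choose ((2*(t+1)+1) - (m+(t+1)+1)) from by congr 1; omega,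
          Nat.choose_symm (by omega), Nat.choose_succ_succ]
      have goal' : -(c1 + c2) = (-1:ℝ)^m * (((2*(t+1)+1).choose ((t+1)-m) : ℕ) : ℝ) * K := by
        rw [← hP, hc1, hc2]
        push_cast
        simp only [Nat.add_sub_cancel, pow_add, pow_succ, pow_zero]
        linear_combination (((-1:ℝ)^m) * ((((2*(t+1)).choose (m+(t+1)) : ℕ) : ℝ)
          + (((2*(t+1)).choose (m+(t+1)+1) : ℕ) : ℝ)) * K) * hsq
      rw [← goal']
      linarith [hz]
    · rw [if_neg hlt] at hz
      have hmeq : m = t + 1 := by simp [Finset.mem_range] at hlt; omega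
      subst hmeq
      have goal' : -(c1 + 0) = (-1:ℝ)^(t+1) * (((2*(t+1)+1).choose ((t+1)-(t+1)) : ℕ) : ℝ) * K := by
        rw [hc1, Nat.sub_self, Nat.choose_zero_right,
          show t+1+(t+1) = 2*(t+1) from by ring, Nat.choose_self]
        push_cast
        rw [pow_mul]
        simp only [Nat.add_sub_cancel, pow_succ]
        norm_num
      rw [← goal']
      linarith [hz]
  · rw [if_neg hms]
    rw [if_neg (by simp [Finset.mem_range]; omega : ¬ (m + s ∈ range (2*s+1))),
      if_neg (by simp [Finset.mem_range]; omega : ¬ (m + s + 1 ∈ range (2*s+1)))] at hz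
    linarith [hz]

private lemma PA_eval_nonneg (s m : ℕ) : 0 ≤ (PA s).eval (m:ℝ) := by
  simp only [PA, eval_add, eval_mul, eval_prod, eval_X, eval_C]
  have h1 : ∀ (k : ℕ) (f : ℕ → ℝ), (∀ i, 0 ≤ f i) → 0 ≤ ∏ i ∈ range k, ((m:ℝ) + f i) := by
    intro k f hf
    apply Finset.prod_nonneg
    intro i _
    have := hf i
    positivity
  apply add_nonneg <;> apply mul_nonneg
  · exact h1 _ _ fun i => by positivity
  · exact h1 _ _ fun i => by positivity
  · exact h1 _ _ fun i => by positivity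
  · exact h1 _ _ fun i => by positivity

private lemma PA_eval_le (s m : ℕ) :
    (PA s).eval (m:ℝ) ≤ 2 * ((2*s+1:ℕ):ℝ)^(2*s) * ((m+1:ℕ):ℝ)^(2*s) := by
  have hB1 : (1:ℝ) ≤ ((m+1:ℕ):ℝ) * ((2*s+1:ℕ):ℝ) := by
    have h1 : (1:ℝ) ≤ ((m+1:ℕ):ℝ) := by exact_mod_cast Nat.succ_le_succ (Nat.zero_le m)
    have h2 : (1:ℝ) ≤ ((2*s+1:ℕ):ℝ) := by exact_mod_cast Nat.succ_le_succ (Nat.zero_le _)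
    nlinarith
  set B : ℝ := ((m+1:ℕ):ℝ) * ((2*s+1:ℕ):ℝ) with hBdef
  have hB0 : (0:ℝ) ≤ B := le_trans zero_le_one hB1
  have hnn : ∀ (k : ℕ) (f : ℕ → ℝ), (∀ i, 0 ≤ f i) → 0 ≤ ∏ i ∈ range k, ((m:ℝ) + f i) := by
    intro k f hf0
    apply Finset.prod_nonneg
    intro i _
    have := hf0 i
    positivity
  have hkey : ∀ (k : ℕ) (f : ℕ → ℝ), (∀ i, 0 ≤ f i) → (∀ i ∈ range k, f i ≤ 2*(s:ℝ)+1) →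
      ∏ i ∈ range k, ((m:ℝ) + f i) ≤ B^k := by
    intro k f hf0 hfle
    calc ∏ i ∈ range k, ((m:ℝ) + f i) ≤ ∏ _i ∈ range k, B := by
          apply Finset.prod_le_prod
          · intro i _; have := hf0 i; positivity
          · intro i hi
            have h3 := hfle i hi
            have h4 : (m:ℝ) + (2*(s:ℝ)+1) ≤ B := by
              rw [hBdef]; push_cast; nlinarith
            linarith
      _ = B^k := by rw [Finset.prod_const, Finset.card_range]
  have hq1 : ∏ i ∈ range s, ((m:ℝ) + ((s:ℝ)+1+(i:ℝ))) ≤ B^s :=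
    hkey s _ (fun i => by positivity) (fun i hi => by
      have := Finset.mem_range.mp hi
      have : (i:ℝ) ≤ (s:ℝ) - 1 := by
        have : (i:ℝ) + 1 ≤ (s:ℝ) := by exact_mod_cast this
        linarith
      linarith)
  have hq2 : ∏ i ∈ range (s-1), ((m:ℝ) + (1+(i:ℝ))) ≤ B^(s-1) :=
    hkey _ _ (fun i => by positivity) (fun i hi => by
      have h5 := Finset.mem_range.mp hi
      have h6 : (i:ℝ) + 1 ≤ (s:ℝ) - 1 + 1 := by
        have : (i:ℝ) + 1 ≤ ((s-1:ℕ):ℝ) := by exact_mod_cast h5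
        have : ((s-1:ℕ):ℝ) ≤ (s:ℝ) - 1 + 1 := by
          have := Nat.sub_le s 1
          have : ((s-1:ℕ):ℝ) ≤ (s:ℝ) := by exact_mod_cast this
          linarith
        linarith
      have hs0 : (0:ℝ) ≤ (s:ℝ) := by positivity
      linarith)
  have hq3 : ∏ i ∈ range (s-1), ((m:ℝ) + ((s:ℝ)+2+(i:ℝ))) ≤ B^(s-1) :=
    hkey _ _ (fun i => by positivity) (fun i hi => by
      have h5 := Finset.mem_range.mp hi
      have h7 : (i:ℝ) + 1 ≤ ((s-1:ℕ):ℝ) + 1 := by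
        have : (i:ℝ) ≤ ((s-1:ℕ):ℝ) - 1 + 1 - 1 := by
          have : (i:ℝ) + 1 ≤ ((s-1:ℕ):ℝ) := by exact_mod_cast h5
          linarith
        linarith
      have h8 : ((s-1:ℕ):ℝ) ≤ (s:ℝ) := by exact_mod_cast Nat.sub_le s 1
      by_cases hs1 : 1 ≤ s
      · have : ((s-1:ℕ):ℝ) = (s:ℝ) - 1 := by
          push_cast [Nat.cast_sub hs1]; ring
        linarith
      · have : s = 0 := by omega
        subst this
        simp at h5)
  have hq4 : ∏ i ∈ range s, ((m:ℝ) + (1+(i:ℝ))) ≤ B^s :=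
    hkey _ _ (fun i => by positivity) (fun i hi => by
      have h5 := Finset.mem_range.mp hi
      have : (i:ℝ) + 1 ≤ (s:ℝ) := by exact_mod_cast h5
      have hs0 : (0:ℝ) ≤ (s:ℝ) := by positivity
      linarith)
  have hmono : B^(s + (s-1)) ≤ B^(2*s) := pow_le_pow_right₀ hB1 (by omega)
  have hfin : (PA s).eval (m:ℝ) ≤ B^(2*s) + B^(2*s) := by
    simp only [PA, eval_add, eval_mul, eval_prod, eval_X, eval_C]
    have t1 : (∏ i ∈ range s, ((m:ℝ) + ((s:ℝ)+1+(i:ℝ)))) * (∏ i ∈ range (s-1), ((m:ℝ) + (1+(i:ℝ))))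
        ≤ B^(2*s) := by
      calc _ ≤ B^s * B^(s-1) := mul_le_mul hq1 hq2 (hnn _ _ (fun i => by positivity)) (by positivity)
        _ = B^(s+(s-1)) := (pow_add B s (s-1)).symm
        _ ≤ B^(2*s) := hmono
    have t2 : (∏ i ∈ range (s-1), ((m:ℝ) + ((s:ℝ)+2+(i:ℝ)))) * (∏ i ∈ range s, ((m:ℝ) + (1+(i:ℝ))))
        ≤ B^(2*s) := by
      calc _ ≤ B^(s-1) * B^s := mul_le_mul hq3 hq4 (hnn _ _ (fun i => by positivity)) (by positivity)
        _ = B^((s-1)+s) := (pow_add B (s-1) s).symm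
        _ ≤ B^(2*s) := by rw [show (s-1)+s = s+(s-1) from by omega]; exact hmono
    linarith
  calc (PA s).eval (m:ℝ) ≤ B^(2*s) + B^(2*s) := hfin
    _ = 2 * ((2*s+1:ℕ):ℝ)^(2*s) * ((m+1:ℕ):ℝ)^(2*s) := by
      rw [hBdef, mul_pow]; ring

private lemma summable_PA (s : ℕ) (r : ℝ) (h0 : 0 < r) (h1 : r < 1) :
    Summable (fun m : ℕ => (PA s).eval (m:ℝ) * r^m) := by
  have hg : Summable (fun m : ℕ => ((m:ℝ))^(2*s) * r^m) :=
    summable_pow_mul_geometric_of_norm_lt_one (2*s) (by rwa [Real.norm_eq_abs, abs_of_pos h0])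
  have hg1 : Summable (fun m : ℕ => (((m+1:ℕ)):ℝ)^(2*s) * r^(m+1)) := by
    have h2 := hg.comp_injective (add_left_injective 1)
    apply h2.congr
    intro m
    simp [Function.comp]
  have hg2 : Summable (fun m : ℕ => (((m+1:ℕ)):ℝ)^(2*s) * r^m) := by
    have := hg1.mul_left r⁻¹
    apply this.congr
    intro m
    field_simp
    ring
  have hg3 : Summable (fun m : ℕ => 2 * ((2*s+1:ℕ):ℝ)^(2*s) * ((((m+1:ℕ)):ℝ)^(2*s) * r^m)) :=
    hg2.mul_left _
  apply hg3.of_nonneg_of_le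
  · intro m
    exact mul_nonneg (PA_eval_nonneg s m) (by positivity)
  · intro m
    have := PA_eval_le s m
    have hr : (0:ℝ) ≤ r^m := by positivity
    calc (PA s).eval (m:ℝ) * r^m ≤ (2 * ((2*s+1:ℕ):ℝ)^(2*s) * ((m+1:ℕ):ℝ)^(2*s)) * r^m :=
          mul_le_mul_of_nonneg_right this hr
      _ = 2 * ((2*s+1:ℕ):ℝ)^(2*s) * (((m+1:ℕ):ℝ)^(2*s) * r^m) := by ring

private lemma tsum_PA (s : ℕ) (hs : 1 ≤ s) (r : ℝ) (h0 : 0 < r) (h1 : r < 1) :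
    (∑' m : ℕ, (PA s).eval (m:ℝ) * r^m) * (1-r)^(2*s)
    = ∑ k ∈ range (s+1), (-1:ℝ)^k * (((2*s+1).choose (s-k) : ℕ):ℝ)
        * (((s.factorial:ℕ):ℝ) * (((s-1).factorial:ℕ):ℝ)) * r^k := by
  have hsum := summable_PA s r h0 h1
  set h : ℕ → ℕ → ℝ := fun j m =>
    if j ≤ m then (-1:ℝ)^j * (((2*s).choose j : ℕ) : ℝ) * (PA s).eval (((m-j : ℕ)):ℝ) * r^m else 0
    with hdef
  have hcomp : ∀ j : ℕ, (fun m : ℕ => h j (m + j)) =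
      (fun m : ℕ => ((PA s).eval (m:ℝ) * r^m) * ((-1:ℝ)^j * (((2*s).choose j : ℕ) : ℝ) * r^j)) := by
    intro j
    funext m
    simp only [hdef]
    rw [if_pos (Nat.le_add_left j m), Nat.add_sub_cancel, pow_add]
    ring
  have hsupp : ∀ j : ℕ, ∀ x ∉ Set.range (fun m : ℕ => m + j), h j x = 0 := by
    intro j x hx
    simp only [hdef]
    rw [if_neg]
    intro hjx
    exact hx ⟨x - j, by show x - j + j = x; omega⟩
  have hsummable : ∀ j : ℕ, Summable (h j) := by
    intro j
    have hcs : Summable ((h j) ∘ (fun m : ℕ => m + j)) := by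
      rw [show (h j) ∘ (fun m : ℕ => m + j) = fun m => h j (m + j) from rfl, hcomp j]
      exact hsum.mul_right _
    exact ((add_left_injective j).summable_iff (hsupp j)).mp hcs
  have hshift : ∀ j : ℕ, (∑' m : ℕ, (PA s).eval (m:ℝ) * r^m) * ((-1:ℝ)^j * (((2*s).choose j : ℕ) : ℝ) * r^j)
      = ∑' m : ℕ, h j m := by
    intro j
    have e := Function.Injective.tsum_eq (g := fun m : ℕ => m + j) (add_left_injective j)
      (f := h j) (Function.support_subset_iff'.2 (hsupp j))
    rw [← tsum_mul_right, ← e]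
    exact tsum_congr fun m => (congrFun (hcomp j) m).symm
  have hpow : (1-r)^(2*s) = ∑ j ∈ range (2*s+1), (-1:ℝ)^j * (((2*s).choose j:ℕ):ℝ) * r^j := by
    rw [show (1:ℝ) - r = -r + 1 from by ring, add_pow]
    exact Finset.sum_congr rfl fun j hj => by rw [neg_pow]; ring
  rw [hpow, Finset.mul_sum]
  rw [Finset.sum_congr rfl (fun j _ => hshift j)]
  rw [← Summable.tsum_finsetSum (fun j _ => hsummable j)]
  have hinner : ∀ m : ℕ, (∑ j ∈ range (2*s+1), h j m)
      = (if m ≤ s then (-1:ℝ)^m * (((2*s+1).choose (s-m) : ℕ) : ℝ)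
          * (((s.factorial : ℕ) : ℝ) * (((s-1).factorial : ℕ) : ℝ)) else 0) * r^m := by
    intro m
    rw [← coeff_id_s10 s m hs, Finset.sum_mul]
    apply Finset.sum_congr rfl
    intro j _
    simp only [hdef, ite_mul, zero_mul]
  rw [tsum_congr hinner, tsum_eq_sum (s := range (s+1))
    (by intro m hm; rw [if_neg (by simp [Finset.mem_range] at hm; omega)]; ring)]
  exact Finset.sum_congr rfl fun k hk => by
    rw [if_pos (by have := Finset.mem_range.mp hk; omega : k ≤ s)]

private lemma natkey (s m : ℕ) (hs : 1 ≤ s) :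
    s * ((m + 2*s).choose (2*s)) * ((2*s).choose s) * (s.factorial * (s-1).factorial)
      = (m+1).ascFactorial (2*s) := by
  apply Nat.eq_of_mul_eq_mul_right (Nat.factorial_pos m)
  have h3 : s * (s-1).factorial = s.factorial := Nat.mul_factorial_pred (by omega)
  have h4 : (2*s).choose s * s.factorial * s.factorial = (2*s).factorial := by
    have h := Nat.choose_mul_factorial_mul_factorial (show s ≤ 2*s by omega)
    rw [show 2*s - s = s from by omega] at h
    exact h
  have h5 : (m+2*s).choose (2*s) * (2*s).factorial * m.factorial = (m+2*s).factorial := by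
    have h := Nat.choose_mul_factorial_mul_factorial (show 2*s ≤ m+2*s by omega)
    rw [show m+2*s - 2*s = m from by omega] at h
    exact h
  have h6 : m.factorial * (m+1).ascFactorial (2*s) = (m + 2*s).factorial :=
    Nat.factorial_mul_ascFactorial m (2*s)
  calc s * ((m + 2*s).choose (2*s)) * ((2*s).choose s) * (s.factorial * (s-1).factorial) * m.factorial
      = ((2*s).choose s * s.factorial * (s * (s-1).factorial)) * (m + 2*s).choose (2*s) * m.factorial := by
        ring
    _ = ((2*s).choose s * s.factorial * s.factorial) * (m + 2*s).choose (2*s) * m.factorial := by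
        rw [h3]
    _ = (m+2*s).choose (2*s) * (2*s).factorial * m.factorial := by rw [h4]; ring
    _ = (m+2*s).factorial := h5
    _ = (m+1).ascFactorial (2*s) * m.factorial := by rw [← h6]; ring

private lemma abs_eps (s m : ℕ) (hs : 1 ≤ s) :
    |epsCoef s m| = π * ((PA s).eval (m:ℝ) / (((s.factorial:ℕ):ℝ) * (((s-1).factorial:ℕ):ℝ))) := by
  have hfrac : (0:ℝ) ≤ (s:ℝ) * (2*(m:ℝ)+2*(s:ℝ)+1) / (((m:ℝ)+s)*((m:ℝ)+s+1)) := by positivity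
  rw [epsCoef, abs_mul, abs_mul, abs_mul, abs_mul, abs_pow, abs_neg, abs_one, one_pow, mul_one,
    abs_of_nonneg pi_pos.le, abs_of_nonneg hfrac, Nat.abs_cast, Nat.abs_cast]
  have he := PA_eval_nat s m hs
  have hck : (s:ℝ) * (((m+2*s).choose (2*s):ℕ):ℝ) * ((((2*s).choose s):ℕ):ℝ)
      * (((s.factorial:ℕ):ℝ) * (((s-1).factorial:ℕ):ℝ)) = (((m+1).ascFactorial (2*s):ℕ):ℝ) := by
    exact_mod_cast natkey s m hs
  have hm1 : ((m:ℝ)+s) ≠ 0 := by positivity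
  have hm2 : ((m:ℝ)+s+1) ≠ 0 := by positivity
  have hK : (((s.factorial:ℕ):ℝ) * (((s-1).factorial:ℕ):ℝ)) ≠ 0 := by positivity
  field_simp
  linear_combination (2*(m:ℝ)+2*(s:ℝ)+1) * hck - he

/-- For `n ≥ 1`, `s ≥ 1`, `ρ > 1`, `M ≥ 0` and complex coefficients `α_k` with
`|α_k| ≤ 2M ρ^(−k)`, the series `Σ_m α_{(2s+1)n+2mn} ε_m` converges absolutely and
`|Σ_m α_{(2s+1)n+2mn} ε_m| ≤ 2πM (Σ_{k=0}^{s} (−1)^k C(2s+1, s−k) ρ^(2n(s−k))) /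
(ρ^n (ρ^(2n) − 1)^(2s))`. -/
theorem stmt10 (n s : ℕ) (hn : 1 ≤ n) (hs : 1 ≤ s) (ρ : ℝ) (hρ : 1 < ρ)
    (M : ℝ) (hM : 0 ≤ M) (α : ℕ → ℂ)
    (hα : ∀ k : ℕ, ‖α k‖ ≤ 2 * M * ρ ^ (-(k:ℤ))) :
    Summable (fun m : ℕ => ‖(α ((2*s+1)*n + 2*m*n)) * (epsCoef s m : ℂ)‖) ∧
    ‖∑' m : ℕ, (α ((2*s+1)*n + 2*m*n)) * (epsCoef s m : ℂ)‖ ≤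
      2 * π * M *
        (∑ k ∈ Finset.range (s + 1),
            (-1:ℝ)^k * (Nat.choose (2*s+1) (s - k) : ℝ) * ρ ^ (2*n*(s - k))) /
          (ρ ^ n * (ρ ^ (2*n) - 1) ^ (2*s)) := by
  have hρ0 : (0:ℝ) < ρ := lt_trans one_pos hρ
  set R : ℝ := ρ ^ (2*n) with hR
  have hR1 : 1 < R := one_lt_pow₀ hρ (by omega)
  have hR0 : (0:ℝ) < R := lt_trans one_pos hR1
  set r : ℝ := R⁻¹ with hr
  have hr0 : 0 < r := inv_pos.mpr hR0
  have hr1 : r < 1 := by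
    rw [hr]
    exact inv_lt_one_of_one_lt₀ hR1
  set K : ℝ := ((s.factorial:ℕ):ℝ) * (((s-1).factorial:ℕ):ℝ) with hKdef
  have hKpos : (0:ℝ) < K := by positivity
  set T : ℝ := ∑' m : ℕ, (PA s).eval (m:ℝ) * r^m with hT
  set S : ℝ := ∑ k ∈ Finset.range (s + 1),
      (-1:ℝ)^k * (Nat.choose (2*s+1) (s - k) : ℝ) * ρ ^ (2*n*(s - k)) with hS
  clear_value R r K T S
  -- power rewrite
  have hpow : ∀ m : ℕ, (ρ:ℝ) ^ (-(((2*s+1)*n + 2*m*n : ℕ):ℤ)) = ρ⁻¹^n * r^s * r^m := by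
    intro m
    rw [zpow_neg, zpow_natCast,
      show (2*s+1)*n + 2*m*n = n + (2*n)*s + (2*n)*m from by ring,
      pow_add, pow_add, mul_inv, mul_inv, hr, hR, inv_pow, inv_pow, inv_pow]
    ring
  -- pointwise bound
  have hnormeq : ∀ m : ℕ, ‖(α ((2*s+1)*n + 2*m*n)) * ((epsCoef s m : ℝ) : ℂ)‖
      = ‖α ((2*s+1)*n + 2*m*n)‖ * |epsCoef s m| := by
    intro m
    rw [norm_mul, Complex.norm_real, Real.norm_eq_abs]
  have hb : ∀ m : ℕ, ‖(α ((2*s+1)*n + 2*m*n)) * ((epsCoef s m : ℝ) : ℂ)‖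
      ≤ (2*π*M/K) * (ρ⁻¹^n * r^s) * ((PA s).eval (m:ℝ) * r^m) := by
    intro m
    rw [hnormeq m]
    calc ‖α ((2*s+1)*n + 2*m*n)‖ * |epsCoef s m|
        ≤ (2 * M * ρ ^ (-(((2*s+1)*n + 2*m*n : ℕ):ℤ))) * |epsCoef s m| :=
          mul_le_mul_of_nonneg_right (hα _) (abs_nonneg _)
      _ = (2*π*M/K) * (ρ⁻¹^n * r^s) * ((PA s).eval (m:ℝ) * r^m) := by
          rw [abs_eps s m hs, hpow m, ← hKdef]
          field_simp
  have hsum2 : Summable (fun m : ℕ => (2*π*M/K) * (ρ⁻¹^n * r^s) * ((PA s).eval (m:ℝ) * r^m)) :=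
    (summable_PA s r hr0 hr1).mul_left _
  have hsum1 : Summable (fun m : ℕ => ‖(α ((2*s+1)*n + 2*m*n)) * ((epsCoef s m : ℝ) : ℂ)‖) :=
    Summable.of_nonneg_of_le (fun m => norm_nonneg _) hb hsum2
  refine ⟨hsum1, ?_⟩
  -- the geometric-sum terms
  have hterm : ∀ k ∈ Finset.range (s+1), ρ^(2*n*(s-k)) * r^s = r^k := by
    intro k hk
    have hks : k ≤ s := by have := Finset.mem_range.mp hk; omega
    have h7 : ρ^(2*n*(s-k)) = R^(s-k) := by rw [hR, ← pow_mul]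
    have h8 : R^(s-k) * R^k = R^s := by rw [← pow_add, Nat.sub_add_cancel hks]
    rw [h7, hr, inv_pow, inv_pow]
    field_simp
    linear_combination h8
  have hQ : (∑ k ∈ Finset.range (s+1), (-1:ℝ)^k * (((2*s+1).choose (s-k) : ℕ):ℝ)
      * K * r^k) = S * (K * r^s) := by
    rw [hS, Finset.sum_mul]
    apply Finset.sum_congr rfl
    intro k hk
    linear_combination (-((-1:ℝ)^k * (((2*s+1).choose (s-k) : ℕ):ℝ) * K)) * (hterm k hk)
  have h1rne : ((1:ℝ)-r)^(2*s) ≠ 0 := by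
    have : (0:ℝ) < 1 - r := by linarith
    positivity
  have hTval : T = (S * (K * r^s)) / (1-r)^(2*s) := by
    rw [eq_div_iff h1rne, hT]
    rw [tsum_PA s hs r hr0 hr1, ← hKdef]
    exact hQ
  have h1r : (1:ℝ) - r = (R-1) * r := by
    rw [hr]
    field_simp
  calc ‖∑' m : ℕ, (α ((2*s+1)*n + 2*m*n)) * ((epsCoef s m : ℝ) : ℂ)‖
      ≤ ∑' m : ℕ, ‖(α ((2*s+1)*n + 2*m*n)) * ((epsCoef s m : ℝ) : ℂ)‖ :=
        norm_tsum_le_tsum_norm hsum1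
    _ ≤ ∑' m : ℕ, (2*π*M/K) * (ρ⁻¹^n * r^s) * ((PA s).eval (m:ℝ) * r^m) :=
        Summable.tsum_le_tsum hb hsum1 hsum2
    _ = (2*π*M/K) * (ρ⁻¹^n * r^s) * T := by
        rw [hT, tsum_mul_left]
    _ = 2 * π * M * S / (ρ ^ n * (R - 1) ^ (2*s)) := by
        rw [hTval, h1r, mul_pow]
        have hρn : (ρ:ℝ)^n ≠ 0 := by positivity
        have hRne : (R:ℝ) - 1 ≠ 0 := by linarith
        have hrne : r ≠ 0 := ne_of_gt hr0
        field_simp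
        have hρinv : ρ^n * ρ⁻¹^n = 1 := by rw [← mul_pow, mul_inv_cancel₀ hρ0.ne', one_pow]
        linear_combination M * r^(s*2) * S * hρinv
end

section
/- Let n ≥ 1, s ≥ 1 be integers and ρ > 1, and set a_{2n} = (ρ^{2n} + ρ^{−2n})/2. Then ∫_{0}^{π} dθ / (a_{2n} + cos 2nθ)^{2s} = (2ρ^{2n})^{2s} · π · (Σ_{m=0}^{2s−1} C(2s−1, m) C(4s−m−2, 2s−1) (ρ^{4n} − 1)^m) / (ρ^{4n} − 1)^{4s−1}. -/
open Real

open Real Finset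

namespace Stmt13aux

noncomputable def Ia (a : ℝ) (k : ℕ) : ℝ := ∫ θ in (0:ℝ)..π, 1 / (a + Real.cos θ) ^ k

lemma denom_pos {a : ℝ} (ha : 1 < a) (θ : ℝ) : 0 < a + Real.cos θ := by
  have := Real.neg_one_le_cos θ; linarith

lemma contF {a : ℝ} (ha : 1 < a) (k : ℕ) :
    Continuous fun θ : ℝ => 1 / (a + Real.cos θ) ^ k := by
  apply Continuous.div continuous_const
  · exact (continuous_const.add Real.continuous_cos).pow k
  · intro θ; exact pow_ne_zero _ (ne_of_gt (denom_pos ha θ))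

lemma Ia_zero (a : ℝ) : Ia a 0 = π := by
  simp [Ia, pi_pos.le]

/-- base case -/
lemma Ia_one {r : ℝ} (hr : 1 < r) : Ia ((r + r⁻¹) / 2) 1 = 2 * r * π / (r ^ 2 - 1) := by
  have ha : 1 < (r + r⁻¹) / 2 := by
    have h1 : 0 < r := by linarith
    have hri : r * r⁻¹ = 1 := mul_inv_cancel₀ (ne_of_gt h1)
    rw [lt_div_iff₀ (by norm_num : (0:ℝ) < 2)]
    nlinarith [sq_nonneg (r - 1)]
  set a := (r + r⁻¹) / 2 with hadef
  have hr0 : (0:ℝ) < r := by linarith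
  have hr2 : r ^ 2 - 1 > 0 := by nlinarith
  have hden : ∀ θ : ℝ, 0 < r ^ 2 + 2 * r * Real.cos θ + 1 := by
    intro θ
    have h := denom_pos ha θ
    have : r ^ 2 + 2 * r * Real.cos θ + 1 = 2 * r * (a + Real.cos θ) := by
      rw [hadef]; field_simp; ring
    rw [this]; positivity
  have hrc : ∀ θ : ℝ, 0 < r + Real.cos θ := by
    intro θ; have := Real.neg_one_le_cos θ; linarith
  -- antiderivative
  set C := 2 * r / (r ^ 2 - 1) with hC
  have key : ∀ θ ∈ Set.uIcc (0:ℝ) π, HasDerivAt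
      (fun θ => C * (θ - 2 * Real.arctan (Real.sin θ / (r + Real.cos θ))))
      (1 / (a + Real.cos θ) ^ 1) θ := by
    intro θ _
    have h1 : HasDerivAt (fun θ : ℝ => r + Real.cos θ) (-Real.sin θ) θ :=
      (Real.hasDerivAt_cos θ).const_add r
    have h2 : HasDerivAt (fun θ : ℝ => Real.sin θ / (r + Real.cos θ))
        ((Real.cos θ * (r + Real.cos θ) - Real.sin θ * (-Real.sin θ)) / (r + Real.cos θ) ^ 2) θ :=
      (Real.hasDerivAt_sin θ).div h1 (ne_of_gt (hrc θ))
    have h3 := (Real.hasDerivAt_arctan (Real.sin θ / (r + Real.cos θ))).comp θ h2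
    have h4 := ((hasDerivAt_id θ).sub ((h3.const_mul (2:ℝ)))).const_mul C
    refine h4.congr_deriv ?_
    symm
    have hne := ne_of_gt (hrc θ)
    have hne2 := ne_of_gt (hden θ)
    have hax : a + Real.cos θ = (r ^ 2 + 2 * r * Real.cos θ + 1) / (2 * r) := by
      rw [hadef]; field_simp; ring
    have hss : Real.sin θ * -Real.sin θ = Real.cos θ ^ 2 - 1 := by
      linear_combination -(Real.sin_sq_add_cos_sq θ)
    have hs2 : (Real.sin θ / (r + Real.cos θ)) ^ 2
        = (1 - Real.cos θ ^ 2) / (r + Real.cos θ) ^ 2 := by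
      rw [div_pow, Real.sin_sq]
    have harc : 1 / (1 + (Real.sin θ / (r + Real.cos θ)) ^ 2) *
        ((Real.cos θ * (r + Real.cos θ) - Real.sin θ * -Real.sin θ) / (r + Real.cos θ) ^ 2)
        = (r * Real.cos θ + 1) / (r ^ 2 + 2 * r * Real.cos θ + 1) := by
      rw [hss, hs2]
      have e1 : 1 + (1 - Real.cos θ ^ 2) / (r + Real.cos θ) ^ 2
          = (r ^ 2 + 2 * r * Real.cos θ + 1) / (r + Real.cos θ) ^ 2 := by
        field_simp
        ring
      have e2 : Real.cos θ * (r + Real.cos θ) - (Real.cos θ ^ 2 - 1) = r * Real.cos θ + 1 := by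
        ring
      rw [e1, one_div_div, e2, div_mul_div_comm,
        mul_comm ((r ^ 2 + 2 * r * Real.cos θ + 1)) (((r:ℝ) + Real.cos θ) ^ 2),
        mul_comm (((r:ℝ) + Real.cos θ) ^ 2) (r * Real.cos θ + 1)]
      rw [mul_comm (((r:ℝ) + Real.cos θ) ^ 2) (r ^ 2 + 2 * r * Real.cos θ + 1),
        mul_div_mul_right _ _ (pow_ne_zero 2 hne)]
    rw [pow_one, hax, harc, hC]
    field_simp
    linear_combination inv_mul_cancel₀ (show (1 + r * Real.cos θ * 2 + r ^ 2) ≠ 0 by nlinarith [hden θ])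
  have hint : IntervalIntegrable (fun θ => 1 / (a + Real.cos θ) ^ 1) MeasureTheory.volume 0 π :=
    (contF ha 1).intervalIntegrable 0 π
  have := intervalIntegral.integral_eq_sub_of_hasDerivAt key hint
  rw [Ia, this]
  simp [Real.sin_pi, Real.cos_pi, Real.sin_zero, Real.cos_zero, hC]
  ring

lemma intF {a : ℝ} (ha : 1 < a) (k : ℕ) :
    IntervalIntegrable (fun θ => 1 / (a + Real.cos θ) ^ k) MeasureTheory.volume 0 π :=
  (contF ha k).intervalIntegrable 0 π

/-- three-term recurrence -/
lemma Ia_rec {a : ℝ} (ha : 1 < a) (k : ℕ) :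
    ((k:ℝ) + 1) * (a ^ 2 - 1) * Ia a (k + 2)
      = (2 * k + 1) * a * Ia a (k + 1) - k * Ia a k := by
  have hne : ∀ θ : ℝ, a + Real.cos θ ≠ 0 := fun θ => ne_of_gt (denom_pos ha θ)
  -- FTC on sin θ / (a+cos θ)^(k+1)
  have key : ∀ θ ∈ Set.uIcc (0:ℝ) π, HasDerivAt
      (fun θ => Real.sin θ / (a + Real.cos θ) ^ (k + 1))
      (Real.cos θ / (a + Real.cos θ) ^ (k + 1)
        + (k + 1) * Real.sin θ ^ 2 / (a + Real.cos θ) ^ (k + 2)) θ := by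
    intro θ _
    have h1 : HasDerivAt (fun θ : ℝ => a + Real.cos θ) (-Real.sin θ) θ :=
      (Real.hasDerivAt_cos θ).const_add a
    have h2 := h1.pow (k + 1)
    have h3 := (Real.hasDerivAt_sin θ).div h2 (pow_ne_zero _ (hne θ))
    refine h3.congr_deriv ?_
    symm
    simp only [Nat.add_sub_cancel, Pi.pow_apply]
    have hP := hne θ
    have hQ : (a + Real.cos θ) ^ k ≠ 0 := pow_ne_zero _ hP
    rw [show (a + Real.cos θ) ^ (k + 1) = (a + Real.cos θ) ^ k * (a + Real.cos θ) from
        pow_succ _ _,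
      show (a + Real.cos θ) ^ (k + 2) = (a + Real.cos θ) ^ k * (a + Real.cos θ) ^ 2 from by
        rw [← pow_add]]
    push_cast
    field_simp
    ring
  have h0 : (∫ θ in (0:ℝ)..π, (Real.cos θ / (a + Real.cos θ) ^ (k + 1)
      + (k + 1) * Real.sin θ ^ 2 / (a + Real.cos θ) ^ (k + 2))) = 0 := by
    have hcont : Continuous (fun θ => Real.cos θ / (a + Real.cos θ) ^ (k + 1)
        + ((k:ℝ) + 1) * Real.sin θ ^ 2 / (a + Real.cos θ) ^ (k + 2)) := by
      apply Continuous.add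
      · exact Real.continuous_cos.div ((continuous_const.add Real.continuous_cos).pow _)
          fun θ => pow_ne_zero _ (hne θ)
      · exact (continuous_const.mul (Real.continuous_sin.pow 2)).div
          ((continuous_const.add Real.continuous_cos).pow _) fun θ => pow_ne_zero _ (hne θ)
    rw [intervalIntegral.integral_eq_sub_of_hasDerivAt key (hcont.intervalIntegrable 0 π)]
    simp
  -- rewrite integrand as linear combination
  have hpt : ∀ θ : ℝ, Real.cos θ / (a + Real.cos θ) ^ (k + 1)
      + ((k:ℝ) + 1) * Real.sin θ ^ 2 / (a + Real.cos θ) ^ (k + 2)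
      = (-(k:ℝ)) * (1 / (a + Real.cos θ) ^ k)
        + ((2 * k + 1) * a) * (1 / (a + Real.cos θ) ^ (k + 1))
        + (-((k:ℝ) + 1) * (a ^ 2 - 1)) * (1 / (a + Real.cos θ) ^ (k + 2)) := by
    intro θ
    have hsq : Real.sin θ ^ 2 = 1 - Real.cos θ ^ 2 := Real.sin_sq θ
    have hp1 : (a + Real.cos θ) ^ (k + 1) = (a + Real.cos θ) ^ k * (a + Real.cos θ) := pow_succ _ _
    have hp2 : (a + Real.cos θ) ^ (k + 2) = (a + Real.cos θ) ^ k * (a + Real.cos θ) ^ 2 := by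
      rw [← pow_add]
    have hP := hne θ
    have hQ : (a + Real.cos θ) ^ k ≠ 0 := pow_ne_zero _ hP
    rw [hsq, hp1, hp2]
    field_simp
    ring
  have hI : (∫ θ in (0:ℝ)..π, (Real.cos θ / (a + Real.cos θ) ^ (k + 1)
      + ((k:ℝ) + 1) * Real.sin θ ^ 2 / (a + Real.cos θ) ^ (k + 2)))
      = (-(k:ℝ)) * Ia a k + ((2 * k + 1) * a) * Ia a (k + 1)
        + (-((k:ℝ) + 1) * (a ^ 2 - 1)) * Ia a (k + 2) := by
    rw [intervalIntegral.integral_congr (g := fun θ => (-(k:ℝ)) * (1 / (a + Real.cos θ) ^ k)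
        + ((2 * k + 1) * a) * (1 / (a + Real.cos θ) ^ (k + 1))
        + (-((k:ℝ) + 1) * (a ^ 2 - 1)) * (1 / (a + Real.cos θ) ^ (k + 2)))
      (fun θ _ => hpt θ)]
    rw [intervalIntegral.integral_add (((intF ha k).const_mul _).add ((intF ha (k+1)).const_mul _))
        ((intF ha (k+2)).const_mul _),
      intervalIntegral.integral_add ((intF ha k).const_mul _) ((intF ha (k+1)).const_mul _),
      intervalIntegral.integral_const_mul, intervalIntegral.integral_const_mul,
      intervalIntegral.integral_const_mul]
    rfl
  rw [h0] at hI
  linarith [hI]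

/-- core binomial identity -/
lemma core (N m : ℕ) :
    (N : ℝ) * (N.choose (m+1) : ℝ)^2
      = (N.choose m : ℝ) * (N.choose (m+1) : ℝ)
        + (N.choose (m+1) : ℝ) * (N.choose (m+2) : ℝ)
        + ((N:ℝ) + 2) * (N.choose m : ℝ) * (N.choose (m+2) : ℝ) := by
  by_cases hm : m < N
  · have h1n := Nat.choose_succ_right_eq N m
    have h2n := Nat.choose_succ_right_eq N (m+1)
    have hc1 : ((N - m : ℕ) : ℝ) = (N : ℝ) - m := by
      rw [Nat.cast_sub hm.le]
    have hc2 : ((N - (m+1) : ℕ) : ℝ) = (N : ℝ) - m - 1 := by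
      rw [Nat.cast_sub hm]; push_cast; ring
    have h1 : (N.choose (m+1) : ℝ) * (m+1) = (N.choose m : ℝ) * ((N:ℝ) - m) := by
      rw [← hc1]; exact_mod_cast congrArg (Nat.cast (R := ℝ)) h1n
    have h2 : (N.choose (m+2) : ℝ) * (m+2) = (N.choose (m+1) : ℝ) * ((N:ℝ) - m - 1) := by
      rw [← hc2]; exact_mod_cast congrArg (Nat.cast (R := ℝ)) h2n
    have hNm : (N:ℝ) - m ≠ 0 := by
      have : (m:ℝ) < N := by exact_mod_cast hm
      linarith
    have hm2 : ((m:ℝ) + 2) ≠ 0 := by positivity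
    have hA : (N.choose m : ℝ) = (N.choose (m+1) : ℝ) * ((m:ℝ)+1) / ((N:ℝ) - m) := by
      rw [eq_div_iff hNm]; push_cast at h1 ⊢; linarith
    have hC : (N.choose (m+2) : ℝ) = (N.choose (m+1) : ℝ) * ((N:ℝ) - m - 1) / ((m:ℝ)+2) := by
      rw [eq_div_iff hm2]; push_cast at h2 ⊢; linarith
    rw [hA, hC]
    field_simp
    ring
  · push_neg at hm
    have hz1 : N.choose (m+1) = 0 := Nat.choose_eq_zero_of_lt (by omega)
    have hz2 : N.choose (m+2) = 0 := Nat.choose_eq_zero_of_lt (by omega)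
    simp [hz1, hz2]

lemma shiftT (t : ℝ) (f : ℕ → ℝ) (M : ℕ) :
    t * ∑ i ∈ Finset.range M, f i * t ^ i
      = ∑ i ∈ Finset.range (M + 1), (if i = 0 then 0 else f (i - 1)) * t ^ i := by
  rw [Finset.sum_range_succ' _ M]
  simp only [Nat.succ_ne_zero, if_false, if_true, eq_self_iff_true, Nat.add_sub_cancel, zero_mul,
    add_zero, Finset.mul_sum]
  apply Finset.sum_congr rfl
  intro i _
  ring

lemma S_rec (t : ℝ) (N : ℕ) :
    ((N:ℝ) + 2) * ∑ i ∈ Finset.range (N + 3), (((N+2).choose i : ℕ) : ℝ)^2 * t ^ i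
      = (2 * (N:ℝ) + 3) * (t + 1) * ∑ i ∈ Finset.range (N + 2), (((N+1).choose i : ℕ) : ℝ)^2 * t ^ i
        - ((N:ℝ) + 1) * (t - 1)^2 * ∑ i ∈ Finset.range (N + 1), ((N.choose i : ℕ) : ℝ)^2 * t ^ i := by
  have eTS1 := shiftT t (fun i => (((N+1).choose i : ℕ) : ℝ)^2) (N + 2)
  have eTS0 := shiftT t (fun i => ((N.choose i : ℕ) : ℝ)^2) (N + 1)
  have eTTS0 := shiftT t (fun i => if i = 0 then 0 else ((N.choose (i-1) : ℕ) : ℝ)^2) (N + 2)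
  have p1 : (∑ i ∈ Finset.range (N + 3), (((N+1).choose i : ℕ) : ℝ)^2 * t ^ i)
      = ∑ i ∈ Finset.range (N + 2), (((N+1).choose i : ℕ) : ℝ)^2 * t ^ i := by
    rw [show N + 3 = (N + 2) + 1 from rfl, Finset.sum_range_succ,
      Nat.choose_eq_zero_of_lt (by omega)]
    simp
  have p0a : (∑ i ∈ Finset.range (N + 2), ((N.choose i : ℕ) : ℝ)^2 * t ^ i)
      = ∑ i ∈ Finset.range (N + 1), ((N.choose i : ℕ) : ℝ)^2 * t ^ i := by
    rw [show N + 2 = (N + 1) + 1 from rfl, Finset.sum_range_succ,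
      Nat.choose_eq_zero_of_lt (by omega)]
    simp
  have p0 : (∑ i ∈ Finset.range (N + 3), ((N.choose i : ℕ) : ℝ)^2 * t ^ i)
      = ∑ i ∈ Finset.range (N + 1), ((N.choose i : ℕ) : ℝ)^2 * t ^ i := by
    rw [show N + 3 = (N + 2) + 1 from rfl, Finset.sum_range_succ,
      Nat.choose_eq_zero_of_lt (by omega)]
    simp [p0a]
  have pd1 : (∑ i ∈ Finset.range (N + 3),
        (if i = 0 then 0 else ((N.choose (i-1) : ℕ) : ℝ)^2) * t ^ i)
      = ∑ i ∈ Finset.range (N + 2),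
        (if i = 0 then 0 else ((N.choose (i-1) : ℕ) : ℝ)^2) * t ^ i := by
    rw [show N + 3 = (N + 2) + 1 from rfl, Finset.sum_range_succ]
    have : N.choose (N + 2 - 1) = 0 := Nat.choose_eq_zero_of_lt (by omega)
    simp [this]
  have main : ∑ i ∈ Finset.range (N + 3),
      ( ((N:ℝ)+2) * (((N+2).choose i : ℕ) : ℝ)^2
        - (2*(N:ℝ)+3) * (if i = 0 then 0 else (((N+1).choose (i-1) : ℕ) : ℝ)^2)
        - (2*(N:ℝ)+3) * (((N+1).choose i : ℕ) : ℝ)^2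
        + ((N:ℝ)+1) * (if i = 0 then 0 else
            (if i - 1 = 0 then 0 else ((N.choose (i-1-1) : ℕ) : ℝ)^2))
        - 2*((N:ℝ)+1) * (if i = 0 then 0 else ((N.choose (i-1) : ℕ) : ℝ)^2)
        + ((N:ℝ)+1) * ((N.choose i : ℕ) : ℝ)^2 ) * t ^ i = 0 := by
    apply Finset.sum_eq_zero
    intro i _
    rcases i with _ | i
    · apply mul_eq_zero_of_left
      norm_num
      ring
    rcases i with _ | m
    · apply mul_eq_zero_of_left
      norm_num [Nat.choose_one_right]
      push_cast
      ring
    · simp only [Nat.succ_ne_zero, if_false, Nat.add_sub_cancel]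
      have pas1 : ((N+2).choose (m+2) : ℝ) = ((N+1).choose (m+1) : ℝ) + ((N+1).choose (m+2) : ℝ) := by
        rw [Nat.choose_succ_succ (N+1) (m+1)]; push_cast; ring
      have pas2 : ((N+1).choose (m+1) : ℝ) = (N.choose m : ℝ) + (N.choose (m+1) : ℝ) := by
        rw [Nat.choose_succ_succ N m]; push_cast; ring
      have pas3 : ((N+1).choose (m+2) : ℝ) = (N.choose (m+1) : ℝ) + (N.choose (m+2) : ℝ) := by
        rw [Nat.choose_succ_succ N (m+1)]; push_cast; ring
      have hcore := core N m
      rw [pas1, pas2, pas3]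
      apply mul_eq_zero_of_left
      linear_combination (-2) * hcore
  simp only [sub_mul, add_mul, mul_assoc] at main
  simp only [Finset.sum_add_distrib, Finset.sum_sub_distrib, ← Finset.mul_sum] at main
  rw [p1, p0, pd1] at main
  norm_num at eTS1 eTS0 eTTS0 main p1 p0 pd1 ⊢
  linear_combination main - (2*(N:ℝ)+3) * eTS1 + ((N:ℝ)+1) * eTTS0 + ((N:ℝ)+1) * t * eTS0
    - 2*((N:ℝ)+1) * eTS0

noncomputable def CF (r : ℝ) (m : ℕ) : ℝ :=
  (2*r)^(m+1) * π * (∑ j ∈ Finset.range (m+1), ((m.choose j : ℕ):ℝ)^2 * (r^2)^j)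
    / (r^2 - 1)^(2*m+1)

lemma a_gt_one {r : ℝ} (hr : 1 < r) : 1 < (r + r⁻¹) / 2 := by
  have h1 : 0 < r := by linarith
  have hri : r * r⁻¹ = 1 := mul_inv_cancel₀ (ne_of_gt h1)
  rw [lt_div_iff₀ (by norm_num : (0:ℝ) < 2)]
  nlinarith [sq_nonneg (r - 1)]

lemma CF_rec {r : ℝ} (hr : 1 < r) (m : ℕ) :
    ((m:ℝ)+2) * (((r+r⁻¹)/2)^2 - 1) * CF r (m+2)
      = (2*((m:ℝ)+1)+1) * ((r+r⁻¹)/2) * CF r (m+1) - ((m:ℝ)+1) * CF r m := by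
  have hr0 : (0:ℝ) < r := by linarith
  have hr2 : (0:ℝ) < r^2 - 1 := by nlinarith
  have hrne : r ≠ 0 := ne_of_gt hr0
  have hr2ne : r^2 - 1 ≠ 0 := ne_of_gt hr2
  have hS := S_rec (r^2) m
  unfold CF
  rw [show m+2+1 = (m+1)+2 from by omega, pow_add (2*r) (m+1) 2,
    show 2*(m+2)+1 = (2*m+1)+4 from by omega, pow_add (r^2-1) (2*m+1) 4,
    show m+1+1 = (m+1)+1 from rfl, pow_succ (2*r) (m+1),
    show 2*(m+1)+1 = (2*m+1)+2 from by omega, pow_add (r^2-1) (2*m+1) 2]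
  have hBne : (r^2-1)^(2*m+1) ≠ 0 := pow_ne_zero _ hr2ne
  have hAne : (2*r)^(m+1) ≠ 0 := pow_ne_zero _ (by positivity)
  have ha2 : ((r+r⁻¹)/2)^2 - 1 = (r^2-1)^2/(4*r^2) := by field_simp; ring
  have haa : (r+r⁻¹)/2 = (r^2+1)/(2*r) := by field_simp
  set A := (2*r)^(m+1) with hA
  set B := (r^2-1)^(2*m+1) with hB
  set S2 := ∑ j ∈ Finset.range (m+1+2), (((m+1+1).choose j : ℕ):ℝ)^2 * (r^2)^j with hS2
  set S1 := ∑ j ∈ Finset.range (m+1+1), (((m+1).choose j : ℕ):ℝ)^2 * (r^2)^j with hS1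
  set S0 := ∑ j ∈ Finset.range (m+1), ((m.choose j : ℕ):ℝ)^2 * (r^2)^j with hS0
  have hS' : ((m:ℝ) + 2) * S2 = (2*(m:ℝ)+3)*(r^2+1)*S1 - ((m:ℝ)+1)*(r^2-1)^2*S0 := by
    rw [hS2, hS1, hS0]
    convert hS using 2 <;> norm_num
  calc ((m:ℝ)+2) * (((r+r⁻¹)/2)^2 - 1) * (A * (2*r)^2 * π * S2 / (B * (r^2-1)^4))
      = (A * π / (B * (r^2-1)^2)) * (((m:ℝ)+2) * S2) := by
        rw [ha2]; field_simp; ring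
    _ = (A * π / (B * (r^2-1)^2))
          * ((2*(m:ℝ)+3)*(r^2+1)*S1 - ((m:ℝ)+1)*(r^2-1)^2*S0) := by rw [hS']
    _ = (2*((m:ℝ)+1)+1) * ((r+r⁻¹)/2) * (A * (2*r) * π * S1 / (B * (r^2-1)^2))
          - ((m:ℝ)+1) * (A * π * S0 / B) := by
        rw [haa]; field_simp; ring

lemma Ia_closed {r : ℝ} (hr : 1 < r) : ∀ k : ℕ, Ia ((r + r⁻¹) / 2) (k + 1) = CF r k := by
  have ha := a_gt_one hr
  have hr0 : (0:ℝ) < r := by linarith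
  have hr2 : (0:ℝ) < r^2 - 1 := by nlinarith
  have hrne : r ≠ 0 := ne_of_gt hr0
  have hr2ne : r^2 - 1 ≠ 0 := ne_of_gt hr2
  have ha2 : ((r+r⁻¹)/2)^2 - 1 = (r^2-1)^2/(4*r^2) := by field_simp; ring
  have ha2pos : 0 < ((r+r⁻¹)/2)^2 - 1 := by rw [ha2]; positivity
  have haa : (r+r⁻¹)/2 = (r^2+1)/(2*r) := by field_simp
  have base0 : Ia ((r + r⁻¹) / 2) 1 = CF r 0 := by
    rw [Ia_one hr]
    unfold CF
    norm_num
  have base1 : Ia ((r + r⁻¹) / 2) 2 = CF r 1 := by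
    have hrec := Ia_rec ha 0
    rw [Ia_one hr] at hrec
    norm_num at hrec
    -- hrec : (a²-1) * Ia a 2 = a * (2rπ/(r²-1))
    have hCF : (((r+r⁻¹)/2)^2 - 1) * CF r 1 = ((r+r⁻¹)/2) * (2 * r * π / (r^2-1)) := by
      unfold CF
      rw [ha2, haa]
      rw [Finset.sum_range_succ, Finset.sum_range_succ, Finset.sum_range_zero]
      norm_num
      field_simp
      ring
    have := hrec.trans hCF.symm
    exact mul_left_cancel₀ (ne_of_gt ha2pos) this
  intro k
  induction k using Nat.strong_induction_on with
  | _ k IH =>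
    match k with
    | 0 => exact base0
    | 1 => exact base1
    | (m+2) =>
      have ih1 : Ia ((r + r⁻¹) / 2) (m + 2) = CF r (m + 1) := IH (m+1) (by omega)
      have ih0 : Ia ((r + r⁻¹) / 2) (m + 1) = CF r m := IH m (by omega)
      have hrec := Ia_rec ha (m + 1)
      rw [ih1, ih0] at hrec
      push_cast at hrec
      have hCF := CF_rec hr m
      have key := hrec.trans hCF.symm
      have hne : ((m:ℝ) + 2) * (((r+r⁻¹)/2)^2 - 1) ≠ 0 := by positivity
      apply mul_left_cancel₀ hne
      rw [show m+2+1 = m+1+2 from rfl]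
      linear_combination key

lemma nat_key (N m : ℕ) (hm : m ≤ N) :
    ∑ j ∈ Finset.range (N+1), (N.choose j)^2 * (j.choose m)
      = N.choose m * (2*N - m).choose N := by
  rw [Finset.range_eq_Ico, ← Finset.sum_Ico_consecutive _ (Nat.zero_le m) (by omega : m ≤ N+1)]
  have h1 : ∑ j ∈ Finset.Ico 0 m, (N.choose j)^2 * (j.choose m) = 0 := by
    apply Finset.sum_eq_zero
    intro j hj
    simp only [Finset.mem_Ico] at hj
    rw [Nat.choose_eq_zero_of_lt hj.2, Nat.mul_zero]
  rw [h1, Nat.zero_add, Finset.sum_Ico_eq_sum_range]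
  have h2 : ∀ i ∈ Finset.range (N + 1 - m), (N.choose (m+i))^2 * ((m+i).choose m)
      = N.choose m * ((N.choose (m+i)) * ((N-m).choose i)) := by
    intro i hi
    simp only [Finset.mem_range] at hi
    have hkn : m + i ≤ N := by omega
    have := Nat.choose_mul (n := N) (Nat.le_add_right m i)
    rw [pow_two, Nat.mul_assoc, this, Nat.add_sub_cancel_left]
    ring
  rw [Finset.sum_congr rfl h2, ← Finset.mul_sum]
  congr 1
  -- Vandermonde
  have hv := Nat.add_choose_eq N (N - m) (N - m)
  rw [Finset.Nat.sum_antidiagonal_eq_sum_range_succ_mk] at hv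
  simp only at hv
  have hNm : N + (N - m) = 2*N - m := by omega
  rw [hNm] at hv
  have hsym : (2*N - m).choose (N - m) = (2*N - m).choose N := by
    have e : N - m = (2*N - m) - N := by omega
    rw [e, Nat.choose_symm (by omega)]
  rw [← hsym, hv, show N + 1 - m = N - m + 1 from by omega, show (N-m).succ = N - m + 1 from rfl,
    ← Finset.sum_range_reflect (fun k => N.choose k * (N - m).choose (N - m - k)) (N - m + 1)]
  apply Finset.sum_congr rfl
  intro i hi
  simp only [Finset.mem_range] at hi
  have e1 : N - m + 1 - 1 - i = N - m - i := by omega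
  rw [e1]
  have e2 : N.choose (N - m - i) = N.choose (m + i) := by
    have e : N - m - i = N - (m + i) := by omega
    rw [e, Nat.choose_symm (by omega)]
  have e3 : (N - m) - (N - m - i) = i := by omega
  rw [e2, e3]

lemma conv_sum (N : ℕ) (u : ℝ) :
    ∑ m ∈ Finset.range (N+1), (N.choose m : ℝ) * ((2*N - m).choose N : ℝ) * u^m
      = ∑ j ∈ Finset.range (N+1), ((N.choose j : ℕ):ℝ)^2 * (u+1)^j := by
  have hexp : ∀ j ∈ Finset.range (N+1), ((N.choose j : ℕ):ℝ)^2 * (u+1)^j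
      = ∑ m ∈ Finset.range (N+1), ((N.choose j : ℕ):ℝ)^2 * ((j.choose m : ℕ):ℝ) * u^m := by
    intro j hj
    simp only [Finset.mem_range] at hj
    have hpad : (u+1)^j = ∑ m ∈ Finset.range (N+1), ((j.choose m : ℕ):ℝ) * u^m :=
      calc (u+1)^j = ∑ m ∈ Finset.range (j+1), u^m * ((j.choose m : ℕ):ℝ) := by
            rw [add_pow]; simp
        _ = ∑ m ∈ Finset.range (N+1), u^m * ((j.choose m : ℕ):ℝ) := by
            apply Finset.sum_subset (Finset.range_subset_range.2 (by omega : j + 1 ≤ N + 1))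
            intro m _ hm2
            simp only [Finset.mem_range, not_lt] at hm2
            rw [Nat.choose_eq_zero_of_lt (show j < m by omega)]
            norm_num
        _ = ∑ m ∈ Finset.range (N+1), ((j.choose m : ℕ):ℝ) * u^m := by
            apply Finset.sum_congr rfl
            intros
            ring
    rw [hpad, Finset.mul_sum]
    apply Finset.sum_congr rfl
    intros
    ring
  rw [Finset.sum_congr rfl hexp, Finset.sum_comm]
  apply Finset.sum_congr rfl
  intro m hm
  simp only [Finset.mem_range] at hm
  have hkey := nat_key N m (by omega)
  have : (∑ j ∈ Finset.range (N+1), ((N.choose j : ℕ):ℝ)^2 * ((j.choose m : ℕ):ℝ))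
      = (N.choose m : ℝ) * ((2*N - m).choose N : ℝ) := by
    have h2 : (((∑ j ∈ Finset.range (N+1), (N.choose j)^2 * (j.choose m) : ℕ)):ℝ)
        = (((N.choose m * (2*N - m).choose N : ℕ)):ℝ) := congrArg _ hkey
    push_cast at h2
    convert h2 using 1
  rw [← Finset.sum_mul, this]

lemma reduce {a : ℝ} (ha : 1 < a) (n k : ℕ) (hn : 1 ≤ n) :
    (∫ θ in (0:ℝ)..π, 1 / (a + Real.cos (2*(n:ℝ)*θ)) ^ k) = Ia a k := by
  have hn0 : (0:ℝ) < n := by exact_mod_cast hn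
  have hc : (2*(n:ℝ)) ≠ 0 := by positivity
  have hint : ∀ t₁ t₂ : ℝ, IntervalIntegrable (fun x => 1/(a+Real.cos x)^k)
      MeasureTheory.volume t₁ t₂ := fun t₁ t₂ => (contF ha k).intervalIntegrable _ _
  have hper : Function.Periodic (fun x => 1/(a+Real.cos x)^k) (2*π) := by
    intro x
    simp only [Real.cos_add_two_pi]
  have h1 := intervalIntegral.integral_comp_mul_left (a := 0) (b := π)
    (fun x => 1/(a+Real.cos x)^k) hc
  simp only [mul_zero] at h1
  have h3 := hper.intervalIntegral_add_zsmul_eq (n:ℤ) 0 hint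
  have hb : (0:ℝ) + (n:ℤ) • (2*π) = 2*(n:ℝ)*π := by
    rw [zsmul_eq_mul]
    push_cast
    ring
  have hb2 : (0:ℝ) + 2*π = 2*π := by ring
  rw [hb, hb2] at h3
  have hcs := intervalIntegral.integral_comp_sub_left (a := 0) (b := π)
    (fun x => 1/(a+Real.cos x)^k) (2*π)
  simp only [Real.cos_two_pi_sub] at hcs
  rw [show 2*π - π = π from by ring, show 2*π - 0 = 2*π from by ring] at hcs
  have h4 : (∫ x in (0:ℝ)..2*π, 1/(a+Real.cos x)^k)
      = 2 * ∫ x in (0:ℝ)..π, 1/(a+Real.cos x)^k := by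
    rw [← intervalIntegral.integral_add_adjacent_intervals (hint 0 π) (hint π (2*π)), ← hcs]
    ring
  rw [Ia, h1, h3, h4, zsmul_eq_mul, smul_eq_mul]
  field_simp
  push_cast
  ring

end Stmt13aux


open Stmt13aux in
/-- For `n ≥ 1`, `s ≥ 1`, `ρ > 1` and `a_{2n} = (ρ^(2n) + ρ^(−2n))/2`:
`∫_{0}^{π} dθ/(a_{2n} + cos 2nθ)^(2s) = (2ρ^(2n))^(2s) π
(Σ_{m=0}^{2s−1} C(2s−1,m) C(4s−m−2,2s−1) (ρ^(4n)−1)^m) / (ρ^(4n)−1)^(4s−1)`. -/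
theorem stmt13 (n s : ℕ) (hn : 1 ≤ n) (hs : 1 ≤ s) (ρ : ℝ) (hρ : 1 < ρ)
    (a : ℝ) (ha : a = (ρ ^ (2*n) + ρ ^ (-(2*(n:ℤ)))) / 2) :
    ∫ θ in (0:ℝ)..π, 1 / (a + Real.cos (2*n*θ)) ^ (2*s) =
      (2 * ρ ^ (2*n)) ^ (2*s) * π *
        (∑ m ∈ Finset.range (2*s),
            (Nat.choose (2*s - 1) m : ℝ) * (Nat.choose (4*s - m - 2) (2*s - 1) : ℝ) *
              (ρ ^ (4*n) - 1) ^ m) /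
        (ρ ^ (4*n) - 1) ^ (4*s - 1) := by
  have hρ0 : (0:ℝ) < ρ := by linarith
  set r := ρ ^ (2*n) with hrdef
  have hr : 1 < r := one_lt_pow₀ hρ (by omega)
  have ha' : a = (r + r⁻¹) / 2 := by
    rw [ha]
    congr 2
    rw [show -(2*(n:ℤ)) = -(((2*n : ℕ)):ℤ) from by push_cast; ring, zpow_neg, zpow_natCast]
  have hstep1 : (∫ θ in (0:ℝ)..π, 1 / (a + Real.cos (2*n*θ)) ^ (2*s))
      = Ia ((r + r⁻¹)/2) (2*s) := by
    rw [ha']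
    exact reduce (a_gt_one hr) n (2*s) hn
  have hstep2 : Ia ((r + r⁻¹)/2) (2*s) = CF r (2*s - 1) := by
    rw [show 2*s = (2*s - 1) + 1 from by omega]
    exact Ia_closed hr (2*s - 1)
  rw [hstep1, hstep2]
  unfold CF
  have e1 : 2*s - 1 + 1 = 2*s := by omega
  have e2 : 2*(2*s - 1) + 1 = 4*s - 1 := by omega
  have e3 : ρ^(4*n) = r^2 := by
    rw [hrdef, show 4*n = 2*n*2 from by ring, pow_mul]
  have hsum : (∑ m ∈ Finset.range (2*s),
        (Nat.choose (2*s - 1) m : ℝ) * (Nat.choose (4*s - m - 2) (2*s - 1) : ℝ) * (r^2 - 1) ^ m)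
      = ∑ j ∈ Finset.range (2*s), (((2*s - 1).choose j : ℕ):ℝ)^2 * (r^2)^j := by
    have hc := conv_sum (2*s - 1) (r^2 - 1)
    rw [show 2*s - 1 + 1 = 2*s from by omega, show (r^2 - 1) + 1 = r^2 from by ring] at hc
    rw [← hc]
    apply Finset.sum_congr rfl
    intro m _
    rw [show 4*s - m - 2 = 2*(2*s - 1) - m from by omega]
  rw [e1, e2, e3, hsum]
end
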